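/- arXiv:1902.11263 — 6 statements merged into one kernel-verified Lean document; each statement's English description precedes it below -/
import Mathlib

section
/- The factor distance is a metric on the set of words over B: for all words x, y, z over B, (i) dist_f(x,y) = dist_f(y,x), (ii) dist_f(x,y) = 0 if and only if x = y, and (iii) dist_f(x,z) ≤ dist_f(x,y) + dist_f(y,z). -/
/-- `wpow x n` is the word `x` repeated `n` times (`x^n`). -/
def wpow {B : Type*} (x : List B) : ℕ → List B
  | 0 => []
  | n + 1 => x ++ wpow x n

/-- Length of a longest common factor (infix) of `u` and `v`. -/
noncomputable def lcfLen {B : Type*} (u v : List B) : ℕ :=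
  sSup {n | ∃ w : List B, w.length = n ∧ w <:+: u ∧ w <:+: v}

/-- The factor distance `dist_f(u,v) = |u| + |v| - 2·|lcf(u,v)|`. -/
noncomputable def distf {B : Type*} (u v : List B) : ℕ :=
  u.length + v.length - 2 * lcfLen u v

/-- A context is a pair of words; `capp c w = c.1 ++ w ++ c.2` is `c[w]`. -/
def capp {B : Type*} (c : List B × List B) (w : List B) : List B :=
  c.1 ++ w ++ c.2

/-- The length `|c|` of a context. -/
def clen {B : Type*} (c : List B × List B) : ℕ :=
  c.1.length + c.2.length

/-- Product of contexts: `(c·d)[w] = c[d[w]]`. -/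
def cmul {B : Type*} (c d : List B × List B) : List B × List B :=
  (c.1 ++ d.1, d.2 ++ c.2)

/-- Power of a context: `c^n[w] = l^n ++ w ++ r^n`. -/
def cpow {B : Type*} (c : List B × List B) (n : ℕ) : List B × List B :=
  (wpow c.1 n, wpow c.2 n)

/-- A nonempty word `x` is primitive if `x = y^p` with `p ≥ 1` implies `p = 1`. -/
def Primitive {B : Type*} (x : List B) : Prop :=
  x ≠ [] ∧ ∀ (y : List B) (p : ℕ), 1 ≤ p → x = wpow y p → p = 1

/-- Words `x` and `y` are conjugate. -/
def Conj {B : Type*} (x y : List B) : Prop :=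
  ∃ t1 t2 : List B, x = t1 ++ t2 ∧ y = t2 ++ t1

/-- The triple of contexts `(c, d, e)` is `x`-commuting: there is a context `f`
such that for every `i ≥ 1` there is `k` with `(e^i·d·c)[ε] = f[x^k]`. -/
def XCommuting {B : Type*} (c d e : List B × List B) (x : List B) : Prop :=
  ∃ f : List B × List B, ∀ i : ℕ, 1 ≤ i → ∃ k : ℕ,
    capp (cmul (cpow e i) (cmul d c)) [] = capp f (wpow x k)



section Aux
variable {B : Type*}

lemma lcf_bdd (u v : List B) :
    BddAbove {n | ∃ w : List B, w.length = n ∧ w <:+: u ∧ w <:+: v} :=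
  ⟨u.length, by rintro n ⟨w, rfl, h1, -⟩; exact h1.length_le⟩

lemma lcfLen_spec (u v : List B) :
    ∃ w : List B, w.length = lcfLen u v ∧ w <:+: u ∧ w <:+: v := by
  have h : lcfLen u v ∈ {n | ∃ w : List B, w.length = n ∧ w <:+: u ∧ w <:+: v} :=
    Nat.sSup_mem ⟨0, [], rfl, List.nil_infix, List.nil_infix⟩ (lcf_bdd u v)
  exact h

lemma le_lcfLen {u v w : List B} (h1 : w <:+: u) (h2 : w <:+: v) :
    w.length ≤ lcfLen u v :=
  le_csSup (lcf_bdd u v) ⟨w, rfl, h1, h2⟩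

lemma infix_pos {w y : List B} (h : w <:+: y) :
    ∃ p, p + w.length ≤ y.length ∧ w = (y.drop p).take w.length := by
  obtain ⟨s, t, rfl⟩ := h
  refine ⟨s.length, by simp, ?_⟩
  rw [List.append_assoc, List.drop_left, List.take_left]

lemma overlap_aux {y w1 w2 : List B} (p1 p2 : ℕ) (hp : p1 ≤ p2)
    (hb1 : p1 + w1.length ≤ y.length) (e1 : w1 = (y.drop p1).take w1.length)
    (hb2 : p2 + w2.length ≤ y.length) (e2 : w2 = (y.drop p2).take w2.length) :
    ∃ w : List B, w <:+: w1 ∧ w <:+: w2 ∧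
      w1.length + w2.length ≤ y.length + w.length := by
  set L1 := w1.length with hL1
  set L2 := w2.length with hL2
  set m := min (p1 + L1) (p2 + L2) - p2 with hm
  refine ⟨(y.drop p2).take m, ?_, ?_, ?_⟩
  · -- infix of w1
    have h1 : (y.drop p2).take m = (w1.drop (p2 - p1)).take m := by
      rw [e1, List.drop_take, List.drop_drop]
      have : p1 + (p2 - p1) = p2 := by omega
      rw [this, List.take_take]
      congr 1
      omega
    rw [h1]
    exact ((List.take_prefix m _).isInfix).trans (List.drop_suffix _ _).isInfix
  · -- infix of w2
    have h2 : (y.drop p2).take m = w2.take m := by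
      rw [e2, List.take_take]
      congr 1
      omega
    rw [h2]
    exact (List.take_prefix m _).isInfix
  · have : ((y.drop p2).take m).length = m := by
      simp only [List.length_take, List.length_drop]
      omega
    rw [this]
    omega

lemma overlap {y w1 w2 : List B} (h1 : w1 <:+: y) (h2 : w2 <:+: y) :
    ∃ w : List B, w <:+: w1 ∧ w <:+: w2 ∧
      w1.length + w2.length ≤ y.length + w.length := by
  obtain ⟨p1, hb1, e1⟩ := infix_pos h1
  obtain ⟨p2, hb2, e2⟩ := infix_pos h2
  rcases le_total p1 p2 with hp | hp
  · exact overlap_aux p1 p2 hp hb1 e1 hb2 e2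
  · obtain ⟨w, hw2, hw1, hlen⟩ := overlap_aux p2 p1 hp hb2 e2 hb1 e1
    exact ⟨w, hw1, hw2, by omega⟩

end Aux


/-- the factor distance is a metric. -/
theorem distf_is_metric {B : Type*} (x y z : List B) :
    distf x y = distf y x ∧ (distf x y = 0 ↔ x = y) ∧
    distf x z ≤ distf x y + distf y z := by
  have hsymm : lcfLen x y = lcfLen y x := by
    unfold lcfLen
    congr 1
    ext n
    exact ⟨fun ⟨w, h, h1, h2⟩ => ⟨w, h, h2, h1⟩, fun ⟨w, h, h1, h2⟩ => ⟨w, h, h2, h1⟩⟩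
  refine ⟨by simp only [distf, hsymm]; omega, ⟨?_, ?_⟩, ?_⟩
  · intro h
    obtain ⟨w, hw, hx, hy⟩ := lcfLen_spec x y
    have hx' := hx.length_le
    have hy' := hy.length_le
    simp only [distf] at h
    have ex : w = x := hx.eq_of_length (by omega)
    have ey : w = y := hy.eq_of_length (by omega)
    rw [← ex, ← ey]
  · rintro rfl
    have h1 : x.length ≤ lcfLen x x := le_lcfLen (List.infix_refl x) (List.infix_refl x)
    obtain ⟨w, hw, hx, -⟩ := lcfLen_spec x x
    have := hx.length_le
    simp only [distf]
    omega
  · obtain ⟨w1, hw1, hx1, hy1⟩ := lcfLen_spec x y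
    obtain ⟨w2, hw2, hy2, hz2⟩ := lcfLen_spec y z
    obtain ⟨w, hi1, hi2, hlen⟩ := overlap hy1 hy2
    have hkey : w.length ≤ lcfLen x z := le_lcfLen (hi1.trans hx1) (hi2.trans hz2)
    have h1 := hx1.length_le
    have h1' := hy1.length_le
    have h2 := hy2.length_le
    have h2' := hz2.length_le
    simp only [distf]
    omega
end

section
/- Let x be a nonempty word and y a word with |y| ≥ |x|. If y is a factor of x^n for some n ∈ ℕ, then there exist a word z conjugate to the primitive root ρ(x), an integer p ≥ 1, and a prefix z' of z such that y = z^p·z' (i.e., the primitive period of y is conjugate to the primitive root of x). -/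
theorem wpow_add {B : Type*} (x : List B) (m n : ℕ) :
    wpow x (m + n) = wpow x m ++ wpow x n := by
  induction m with
  | zero => simp [wpow]
  | succ k ih => simp [wpow, Nat.succ_add, ih]

theorem wpow_length {B : Type*} (x : List B) (n : ℕ) :
    (wpow x n).length = n * x.length := by
  induction n with
  | zero => simp [wpow]
  | succ k ih => simp [wpow, ih, Nat.succ_mul]; ring

theorem wpow_wpow {B : Type*} (r : List B) (q n : ℕ) :
    wpow (wpow r q) n = wpow r (n * q) := by
  induction n with
  | zero => simp [wpow]
  | succ k ih =>
    simp [wpow, ih, Nat.succ_mul, wpow_add]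
    rw [← wpow_add, ← wpow_add, Nat.add_comm]

theorem prefix_wpow_decomp {B : Type*} (z : List B) (hz : z ≠ []) :
    ∀ m (y : List B), y <+: wpow z m →
      ∃ p z', z' <+: z ∧ z'.length < z.length ∧ y = wpow z p ++ z' := by
  intro m
  induction m with
  | zero =>
    intro y hy
    simp [wpow] at hy
    exact ⟨0, [], List.nil_prefix, by simpa using List.length_pos_iff.mpr hz, by simp [wpow, hy]⟩
  | succ k ih =>
    intro y hy
    rw [wpow] at hy
    rcases lt_or_ge y.length z.length with h | h
    · exact ⟨0, y,
        List.prefix_of_prefix_length_le hy (List.prefix_append _ _) h.le, h, by simp [wpow]⟩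
    · have hzy : z <+: y :=
        List.prefix_of_prefix_length_le (List.prefix_append _ _) hy h
      obtain ⟨y', rfl⟩ := hzy
      have : y' <+: wpow z k := (List.prefix_append_right_inj z).mp hy
      obtain ⟨p, z', h1, h2, h3⟩ := ih y' this
      exact ⟨p + 1, z', h1, h2, by simp [wpow, h3]⟩

theorem shift_wpow {B : Type*} (a' s : List B) :
    ∀ k, a' ++ wpow (s ++ a') k = wpow (a' ++ s) k ++ a' := by
  intro k
  induction k with
  | zero => simp [wpow]
  | succ n ih => simp [wpow, ← List.append_assoc]; simp [List.append_assoc, ih]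


/-- a long factor of `x^n` has primitive period conjugate to the
primitive root of `x`. -/
theorem primitive_period_of_factor_of_power {B : Type*} (x y : List B)
    (hx : x ≠ []) (hlen : x.length ≤ y.length)
    (hfac : ∃ n : ℕ, y <:+: wpow x n)
    (r : List B) (hr : Primitive r) (hroot : ∃ q : ℕ, 1 ≤ q ∧ x = wpow r q) :
    ∃ z : List B, Conj z r ∧ ∃ p : ℕ, 1 ≤ p ∧ ∃ z' : List B,
      z' <+: z ∧ y = wpow z p ++ z' := by
  obtain ⟨n, hfacn⟩ := hfac
  obtain ⟨q, hq1, rfl⟩ := hroot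
  have hrne : r ≠ [] := hr.1
  have hrpos : 0 < r.length := List.length_pos_iff.mpr hrne
  rw [wpow_wpow] at hfacn
  set m := n * q with hm
  obtain ⟨a, b, hab⟩ := hfacn
  have ha : a <+: wpow r m := ⟨y ++ b, by rw [← hab]; simp [List.append_assoc]⟩
  obtain ⟨j, a', ha'r, ha'lt, haeq⟩ := prefix_wpow_decomp r hrne m a ha
  obtain ⟨s, hs⟩ := ha'r
  have hjm : j ≤ m := by
    have h1 : a.length ≤ (wpow r m).length := ha.length_le
    rw [haeq] at h1
    simp [wpow_length] at h1
    have : j * r.length ≤ m * r.length := le_trans (Nat.le_add_right _ _) h1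
    exact Nat.le_of_mul_le_mul_right this hrpos
  set z := s ++ a' with hz
  have hzlen : z.length = r.length := by rw [hz, ← hs]; simp [Nat.add_comm]
  have hkey : wpow r j ++ (a' ++ (y ++ (b ++ a'))) = wpow r j ++ (a' ++ wpow z (m - j)) := by
    have e1 : wpow r m ++ a' = wpow r j ++ (a' ++ wpow z (m - j)) := by
      rw [← Nat.add_sub_cancel' hjm, wpow_add, Nat.add_sub_cancel_left]
      rw [List.append_assoc, shift_wpow a' s, hs]

    have e2 : wpow r m ++ a' = wpow r j ++ (a' ++ (y ++ (b ++ a'))) := by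
      rw [← hab, haeq]; simp [List.append_assoc]
    rw [← e1, e2]
  have hy : y <+: wpow z (m - j) := by
    have := List.append_cancel_left (List.append_cancel_left hkey)
    exact ⟨b ++ a', this⟩
  have hzne : z ≠ [] := by
    intro h; rw [h] at hzlen; simp at hzlen; omega
  obtain ⟨p, z', hz'1, hz'2, hz'3⟩ := prefix_wpow_decomp z hzne (m - j) y hy
  have hp : 1 ≤ p := by
    by_contra hp0
    have : p = 0 := by omega
    subst this
    rw [wpow] at hz'3
    have : y.length < z.length := by rw [hz'3]; simpa using hz'2
    have hx : r.length ≤ (wpow r q).length := by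
      rw [wpow_length]; calc r.length = 1 * r.length := by ring
        _ ≤ q * r.length := Nat.mul_le_mul_right _ hq1
    omega
  exact ⟨z, ⟨s, a', rfl, hs.symm⟩, p, hp, z', hz'1, hz'3⟩
end

section
/- Let u1, w1, u2, w2 be words over B and v1, v2 nonempty words with |v1| = |v2|, such that u1·v1^i·w1 = u2·v2^i·w2 for all i ∈ ℕ. Then there exist a nonempty word x and contexts f1, f2 such that for every i ≥ 1 there exists k ∈ ℕ with v1^i = f1[x^k] and v2^i = f2[x^k]. -/
theorem wpow_succ' {B : Type*} (x : List B) (n : ℕ) :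
    wpow x (n + 1) = wpow x n ++ x := by
  rw [wpow_add]; simp [wpow]

theorem prefix_wpow {B : Type*} {v : List B} :
    ∀ (N : ℕ) (s : List B), s <+: wpow v N → ∃ q p, s = wpow v q ++ p ∧ p <+: v := by
  intro N
  induction N with
  | zero =>
      intro s hs
      simp [wpow] at hs
      exact ⟨0, [], by simp [wpow, hs], by simp⟩
  | succ N ih =>
      intro s hs
      have hs' : s <+: v ++ wpow v N := by simpa [wpow] using hs
      by_cases hle : s.length ≤ v.length
      · have hsv : s <+: v :=
          List.prefix_of_prefix_length_le hs' (List.prefix_append _ _) hle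
        exact ⟨0, s, by simp [wpow], hsv⟩
      · push_neg at hle
        have hv_pre : v <+: s :=
          List.prefix_of_prefix_length_le (List.prefix_append _ _) hs' hle.le
        obtain ⟨s', rfl⟩ := hv_pre
        have hs'' : s' <+: wpow v N := by
          obtain ⟨t, ht⟩ := hs'
          exact ⟨t, by simpa [List.append_assoc] using ht⟩
        obtain ⟨q, p, heq, hp⟩ := ih s' hs''
        exact ⟨q + 1, p, by rw [heq]; simp [wpow, List.append_assoc], hp⟩

theorem key_lemma {B : Type*} {v1 v2 : List B} (hv1 : v1 ≠ []) (hlen : v1.length = v2.length)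
    (s w1 w2 : List B)
    (h : ∀ i : ℕ, wpow v1 i ++ w1 = s ++ (wpow v2 i ++ w2)) :
    ∃ p p', v1 = p ++ p' ∧ v2 = p' ++ p := by
  have hsp : s <+: wpow v1 s.length := by
    have h1 : s <+: wpow v1 s.length ++ w1 := ⟨wpow v2 s.length ++ w2, (h s.length).symm⟩
    refine List.prefix_of_prefix_length_le h1 (List.prefix_append _ _) ?_
    rw [wpow_length]
    have hv : 1 ≤ v1.length := List.length_pos_iff.mpr hv1
    calc s.length = s.length * 1 := by ring
      _ ≤ s.length * v1.length := Nat.mul_le_mul_left _ hv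
  obtain ⟨q, p, hseq, hp⟩ := prefix_wpow s.length s hsp
  obtain ⟨p', hv1eq⟩ := hp
  subst hv1eq
  have c2 : p' ++ w1 = v2 ++ (wpow v2 q ++ w2) := by
    have e1 := h (q + 1)
    rw [hseq, wpow_succ'] at e1
    simpa [wpow, List.append_assoc] using e1
  have hp'v2 : p' <+: v2 := by
    refine List.prefix_of_prefix_length_le ⟨w1, c2⟩ (List.prefix_append _ _) ?_
    simp only [List.length_append] at hlen
    omega
  obtain ⟨t, hv2eq⟩ := hp'v2
  subst hv2eq
  have hw1 : w1 = t ++ (wpow (p' ++ t) q ++ w2) := by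
    simpa [List.append_assoc] using c2
  have hpt : p = t := by
    have e2 := h (q + 2)
    rw [hseq] at e2
    rw [show wpow (p' ++ t) (q + 2) = (p' ++ t) ++ ((p' ++ t) ++ wpow (p' ++ t) q) from by
      simp [wpow]] at e2
    rw [show (q : ℕ) + 2 = q + 1 + 1 from rfl, wpow_succ' (p ++ p') (q + 1),
      wpow_succ' (p ++ p') q, hw1] at e2
    simpa [List.append_assoc] using e2
  exact ⟨p, p', rfl, by rw [hpt]⟩

theorem wpow_conj {B : Type*} (p p' : List B) (n : ℕ) :
    wpow (p' ++ p) (n + 1) = p' ++ wpow (p ++ p') n ++ p := by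
  induction n with
  | zero => simp [wpow]
  | succ n ih => simp [wpow, ih, List.append_assoc] at *; simp [wpow, ih, List.append_assoc]

theorem comb_1_1 {B : Type*} (u1 w1 u2 w2 v1 v2 : List B)
    (hv1 : v1 ≠ []) (hv2 : v2 ≠ []) (hlen : v1.length = v2.length)
    (h : ∀ i : ℕ, u1 ++ wpow v1 i ++ w1 = u2 ++ wpow v2 i ++ w2) :
    ∃ x : List B, x ≠ [] ∧ ∃ f1 f2 : List B × List B,
      ∀ i : ℕ, 1 ≤ i → ∃ k : ℕ,
        wpow v1 i = capp f1 (wpow x k) ∧ wpow v2 i = capp f2 (wpow x k) := by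
  have h0 : u1 ++ (wpow v1 0 ++ w1) = u2 ++ (wpow v2 0 ++ w2) := by
    simpa [List.append_assoc] using h 0
  rcases le_total u1.length u2.length with hle | hle
  · have hu : u1 <+: u2 :=
      List.prefix_of_prefix_length_le ⟨wpow v1 0 ++ w1, h0⟩ (List.prefix_append _ _) hle
    obtain ⟨s, rfl⟩ := hu
    have h' : ∀ i, wpow v1 i ++ w1 = s ++ (wpow v2 i ++ w2) := by
      intro i
      simpa [List.append_assoc] using h i
    obtain ⟨p, p', h1, h2⟩ := key_lemma hv1 hlen s w1 w2 h'
    refine ⟨v1, hv1, (v1, []), (p', p), ?_⟩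
    rintro i hi
    obtain ⟨j, rfl⟩ : ∃ j, i = j + 1 := ⟨i - 1, by omega⟩
    refine ⟨j, by simp [capp, wpow], ?_⟩
    rw [h1, h2, wpow_conj]
    simp [capp]
  · have hu : u2 <+: u1 :=
      List.prefix_of_prefix_length_le ⟨wpow v2 0 ++ w2, h0.symm⟩ (List.prefix_append _ _) hle
    obtain ⟨s, rfl⟩ := hu
    have h' : ∀ i, wpow v2 i ++ w2 = s ++ (wpow v1 i ++ w1) := by
      intro i
      simpa [List.append_assoc] using (h i).symm
    obtain ⟨p, p', h1, h2⟩ := key_lemma hv2 hlen.symm s w2 w1 h'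
    refine ⟨v2, hv2, (p', p), (v2, []), ?_⟩
    rintro i hi
    obtain ⟨j, rfl⟩ : ∃ j, i = j + 1 := ⟨i - 1, by omega⟩
    refine ⟨j, ?_, by simp [capp, wpow]⟩
    rw [h2, h1, wpow_conj]
    simp [capp]
end

section
/- Let u1, w1, u2, w2, y2 be words over B and v1, v2, x2 nonempty words with |v1| = |v2| + |x2|, such that u1·v1^i·w1 = u2·v2^i·w2·x2^i·y2 for all i ∈ ℕ. Then there exist a nonempty word x and contexts f1, f2 such that for every i ≥ 1 there exists k ∈ ℕ with v1^i = f1[x^k] and v2^i·w2·x2^i = f2[x^k]. -/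
namespace CombAux

variable {B : Type*} {C : Type*}

theorem wpow_length (x : List B) (n : ℕ) : (wpow x n).length = n * x.length := by
  induction n with
  | zero => simp [wpow]
  | succ n ih => simp [wpow, ih, Nat.succ_mul]; ring

theorem wpow_add (x : List B) (m n : ℕ) : wpow x (m + n) = wpow x m ++ wpow x n := by
  induction m with
  | zero => simp [wpow]
  | succ m ih => rw [Nat.succ_add, wpow, wpow, ih, List.append_assoc]

theorem wpow_wpow (x : List B) (a b : ℕ) : wpow (wpow x a) b = wpow x (b * a) := by
  induction b with
  | zero => simp [wpow]
  | succ b ih => rw [wpow, ih, Nat.succ_mul, Nat.add_comm, wpow_add]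

theorem wpow_sub_one_append (x : List B) (m : ℕ) (hm : 1 ≤ m) :
    wpow x (m - 1) ++ x = wpow x m := by
  obtain ⟨m', rfl⟩ : ∃ m', m = m' + 1 := ⟨m - 1, by omega⟩
  have h1 : wpow x 1 = x := by simp [wpow]
  rw [Nat.add_sub_cancel, wpow_add x m' 1, h1]

theorem getElem?_wpow (x : List B) (i j : ℕ) (h : j < i * x.length) :
    (wpow x i)[j]? = x[j % x.length]? := by
  induction i generalizing j with
  | zero => simp at h
  | succ i ih =>
    rw [wpow]
    rcases Nat.lt_or_ge j x.length with hj | hj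
    · rw [List.getElem?_append_left hj, Nat.mod_eq_of_lt hj]
    · rw [List.getElem?_append_right hj, ih _ (by rw [Nat.succ_mul] at h; omega)]
      rw [← Nat.mod_eq_sub_mod hj]

theorem prefix_getElem? {l l' : List B} (h : l <+: l') {n : ℕ} (hn : n < l.length) :
    l'[n]? = l[n]? := by
  obtain ⟨t, rfl⟩ := h
  rw [List.getElem?_append_left hn]

def IsPer (f : ℕ → C) (d s : ℕ) : Prop := ∀ n, s ≤ n → f (n + d) = f n

theorem isPer_iter {f : ℕ → C} {d s : ℕ} (h : IsPer f d s) (k : ℕ) :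
    ∀ n, s ≤ n → f (n + k * d) = f n := by
  induction k with
  | zero => intro n _; simp
  | succ k ih =>
    intro n hn
    have e : n + (k + 1) * d = n + k * d + d := by ring
    rw [e, h _ (by omega), ih n hn]

theorem isPer_mono {f : ℕ → C} {d s s' : ℕ} (h : IsPer f d s) (hs : s ≤ s') :
    IsPer f d s' := fun n hn => h n (le_trans hs hn)

theorem isPer_gcd {f : ℕ → C} {s : ℕ} :
    ∀ d1 d2 : ℕ, IsPer f d1 s → IsPer f d2 s → IsPer f (Nat.gcd d1 d2) s := by
  intro d1
  induction d1 using Nat.strong_induction_on with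
  | _ d1 ih =>
    intro d2 h1 h2
    rcases Nat.eq_zero_or_pos d1 with rfl | hpos
    · simpa using h2
    · rw [Nat.gcd_rec]
      refine ih (d2 % d1) (Nat.mod_lt _ hpos) d1 ?_ h1
      intro n hn
      have e1 := isPer_iter h1 (d2 / d1) (n + d2 % d1) (le_trans hn (Nat.le_add_right _ _))
      have e2 : n + d2 % d1 + d2 / d1 * d1 = n + d2 := by
        rw [Nat.add_assoc, Nat.mod_add_div']
      rw [e2] at e1
      rw [← e1]
      exact h2 n hn

theorem recon (z : List B) (g : ℕ) (hz : z.length = g) (hg : 0 < g) :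
    ∀ (e : ℕ) (w : List B) (s : ℕ), s ≤ g → w.length = e * g + s →
    (∀ j, j < w.length → w[j]? = z[j % g]?) → w = wpow z e ++ z.take s := by
  intro e
  induction e with
  | zero =>
    intro w s hs hlen hw
    have hws : w.length = s := by omega
    simp only [wpow, List.nil_append]
    apply List.ext_getElem?
    intro n
    rcases Nat.lt_or_ge n w.length with hn | hn
    · rw [hw n hn, List.getElem?_take, if_pos (by omega), Nat.mod_eq_of_lt (by omega)]
    · rw [List.getElem?_eq_none hn, List.getElem?_eq_none (by rw [List.length_take, hz]; omega)]
  | succ e ih =>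
    intro w s hs hlen hw
    have hmul : (e + 1) * g = e * g + g := Nat.succ_mul e g
    have hg_le : g ≤ w.length := by omega
    have h1 : w.take g = z := by
      apply List.ext_getElem?
      intro n
      rcases Nat.lt_or_ge n g with hn | hn
      · rw [List.getElem?_take, if_pos hn, hw n (by omega), Nat.mod_eq_of_lt hn]
      · rw [List.getElem?_eq_none (by rw [List.length_take]; omega),
            List.getElem?_eq_none (by omega)]
    have h2 : w.drop g = wpow z e ++ z.take s := by
      apply ih _ s hs
      · rw [List.length_drop]; omega
      · intro j hj
        rw [List.length_drop] at hj
        rw [List.getElem?_drop, hw (g + j) (by omega)]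
        have e3 : (g + j) % g = j % g := by
          rw [Nat.add_comm, Nat.add_mod_right]
        rw [e3]
    calc w = w.take g ++ w.drop g := (List.take_append_drop g w).symm
      _ = z ++ (wpow z e ++ z.take s) := by rw [h1, h2]
      _ = wpow z (e + 1) ++ z.take s := by rw [wpow, List.append_assoc]

theorem recon3 (z : List B) (g : ℕ) (hz : z.length = g) (hg : 0 < g)
    (m c : ℕ) (hc : c < g) (hm : 1 ≤ m) (w : List B) (hlen : w.length = m * g)
    (hw : ∀ j, j < w.length → w[j]? = z[(j + c) % g]?) :
    w = z.drop c ++ (wpow z (m - 1) ++ z.take c) := by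
  have hmul : m * g = (m - 1) * g + g := by
    have : (m - 1) * g = m * g - g := Nat.sub_one_mul m g
    have h2 : g ≤ m * g := Nat.le_mul_of_pos_left g hm
    omega
  have hgw : g - c ≤ w.length := by omega
  have h1 : w.take (g - c) = z.drop c := by
    apply List.ext_getElem?
    intro n
    rcases Nat.lt_or_ge n (g - c) with hn | hn
    · rw [List.getElem?_take, if_pos hn, hw n (by omega), List.getElem?_drop,
          Nat.mod_eq_of_lt (by omega)]
      congr 1
      omega
    · rw [List.getElem?_eq_none (by rw [List.length_take]; omega),
          List.getElem?_eq_none (by rw [List.length_drop]; omega)]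
  have h2 : w.drop (g - c) = wpow z (m - 1) ++ z.take c := by
    apply recon z g hz hg (m - 1) _ c (le_of_lt hc)
    · rw [List.length_drop]; omega
    · intro j hj
      rw [List.length_drop] at hj
      rw [List.getElem?_drop, hw (g - c + j) (by omega)]
      have e3 : g - c + j + c = j + g := by omega
      rw [e3, Nat.add_mod_right]
  calc w = w.take (g - c) ++ w.drop (g - c) := (List.take_append_drop _ w).symm
    _ = _ := by rw [h1, h2]

theorem rot_getElem? (z : List B) (g s : ℕ) (hz : z.length = g) (hs : s < g)
    (j : ℕ) (hj : j < g) : (z.drop s ++ z.take s)[j]? = z[(s + j) % g]? := by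
  rcases Nat.lt_or_ge j (g - s) with hj2 | hj2
  · rw [List.getElem?_append_left (by rw [List.length_drop]; omega),
        List.getElem?_drop, Nat.mod_eq_of_lt (by omega)]
  · rw [List.getElem?_append_right (by rw [List.length_drop]; omega)]
    rw [List.length_drop, hz]
    rw [List.getElem?_take, if_pos (by omega)]
    have e1 : s + j = j - (g - s) + g := by omega
    rw [e1, Nat.add_mod_right, Nat.mod_eq_of_lt (by omega)]

theorem shift_pow (z : List B) (s : ℕ) (hs : s ≤ z.length) (j : ℕ) :
    z.take s ++ wpow (z.drop s ++ z.take s) j = wpow z j ++ z.take s := by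
  induction j with
  | zero => simp [wpow]
  | succ j ih =>
    rw [wpow, wpow]
    simp only [← List.append_assoc]
    rw [List.take_append_drop]
    simp only [List.append_assoc]
    rw [ih]

theorem assemble2 (z tk : List B) (a b : ℕ) :
    wpow z a ++ (wpow z b ++ tk) = wpow z (a + b) ++ tk := by
  rw [wpow_add, List.append_assoc]

theorem assemble3 (z tk : List B) (a b c : ℕ) :
    wpow z a ++ (wpow z b ++ (wpow z c ++ tk)) = wpow z (a + b + c) ++ tk := by
  rw [assemble2, assemble2]

def seqa (u1 v1 : List B) (n : ℕ) : Option B := (u1 ++ wpow v1 (n + 1))[n]?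

end CombAux

theorem comb_1_2 {B : Type*} (u1 w1 u2 w2 y2 v1 v2 x2 : List B)
    (hv1 : v1 ≠ []) (hv2 : v2 ≠ []) (hx2 : x2 ≠ [])
    (hlen : v1.length = v2.length + x2.length)
    (h : ∀ i : ℕ,
      u1 ++ wpow v1 i ++ w1 = u2 ++ wpow v2 i ++ w2 ++ wpow x2 i ++ y2) :
    ∃ x : List B, x ≠ [] ∧ ∃ f1 f2 : List B × List B,
      ∀ i : ℕ, 1 ≤ i → ∃ k : ℕ,
        wpow v1 i = capp f1 (wpow x k) ∧
        wpow v2 i ++ w2 ++ wpow x2 i = capp f2 (wpow x k) := by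
  have hn1 : 0 < v1.length := List.length_pos_iff.mpr hv1
  have hn2 : 0 < v2.length := List.length_pos_iff.mpr hv2
  have hn3 : 0 < x2.length := List.length_pos_iff.mpr hx2
  -- prefix chain of the limit word
  have hpre : ∀ i j : ℕ, i ≤ j → u1 ++ wpow v1 i <+: u1 ++ wpow v1 j := by
    intro i j hij
    obtain ⟨d, rfl⟩ := Nat.exists_eq_add_of_le hij
    exact ⟨wpow v1 d, by rw [List.append_assoc, ← CombAux.wpow_add]⟩
  -- coherence of W_i with the limit sequence
  have hcoh : ∀ i n : ℕ, n < u1.length + i * v1.length →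
      (u1 ++ wpow v1 i ++ w1)[n]? = CombAux.seqa u1 v1 n := by
    intro i n hn
    have hlen_i : (u1 ++ wpow v1 i).length = u1.length + i * v1.length := by
      rw [List.length_append, CombAux.wpow_length]
    have e1 : (u1 ++ wpow v1 i ++ w1)[n]? = (u1 ++ wpow v1 i)[n]? :=
      List.getElem?_append_left (by omega)
    have e2 : (u1 ++ wpow v1 (i + n + 1))[n]? = (u1 ++ wpow v1 i)[n]? :=
      CombAux.prefix_getElem? (hpre i (i + n + 1) (by omega)) (by omega)
    have hn2' : n < (u1 ++ wpow v1 (n + 1)).length := by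
      rw [List.length_append, CombAux.wpow_length]
      have := Nat.le_mul_of_pos_right (n + 1) hn1
      omega
    have e3 : (u1 ++ wpow v1 (i + n + 1))[n]? = (u1 ++ wpow v1 (n + 1))[n]? :=
      CombAux.prefix_getElem? (hpre (n + 1) (i + n + 1) (by omega)) hn2'
    rw [e1, ← e2, e3]
    rfl
  -- the limit sequence on the v1 lattice
  have hA1 : ∀ t : ℕ, CombAux.seqa u1 v1 (u1.length + t) = v1[t % v1.length]? := by
    intro t
    show (u1 ++ wpow v1 (u1.length + t + 1))[u1.length + t]? = _
    rw [List.getElem?_append_right (Nat.le_add_right _ _)]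
    rw [show u1.length + t - u1.length = t from by omega]
    exact CombAux.getElem?_wpow v1 _ t
      (by have := Nat.le_mul_of_pos_right (u1.length + t + 1) hn1; omega)
  -- the limit sequence on the v2 lattice
  have hA2 : ∀ t : ℕ, CombAux.seqa u1 v1 (u2.length + t) = v2[t % v2.length]? := by
    intro t
    have hlt : u2.length + t < u1.length + (u2.length + t + 1) * v1.length := by
      have := Nat.le_mul_of_pos_right (u2.length + t + 1) hn1; omega
    rw [← hcoh (u2.length + t + 1) (u2.length + t) hlt, h (u2.length + t + 1)]
    simp only [List.append_assoc]
    rw [List.getElem?_append_right (Nat.le_add_right _ _)]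
    rw [show u2.length + t - u2.length = t from by omega]
    rw [List.getElem?_append_left (by
      rw [CombAux.wpow_length]
      have := Nat.le_mul_of_pos_right (u2.length + t + 1) hn2; omega)]
    exact CombAux.getElem?_wpow v2 _ t
      (by have := Nat.le_mul_of_pos_right (u2.length + t + 1) hn2; omega)
  have hper2 : ∀ t K : ℕ, CombAux.seqa u1 v1 (u2.length + (t + K * v2.length))
      = CombAux.seqa u1 v1 (u2.length + t) := by
    intro t K
    rw [hA2 (t + K * v2.length), hA2 t, Nat.add_mul_mod_self_right]
  -- the limit sequence on the x2 lattice
  have hA3 : ∀ t : ℕ, CombAux.seqa u1 v1 (u2.length + (w2.length + t)) = x2[t % x2.length]? := by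
    intro t
    have hI : CombAux.seqa u1 v1 (u2.length + (w2.length + t))
        = CombAux.seqa u1 v1 (u2.length + (w2.length + t
            + (u2.length + w2.length + t + 1) * v2.length)) :=
      (hper2 (w2.length + t) (u2.length + w2.length + t + 1)).symm
    rw [hI]
    set i := u2.length + w2.length + t + 1 with hi_def
    have hlt : u2.length + (w2.length + t + i * v2.length) < u1.length + i * v1.length := by
      rw [hlen, Nat.mul_add]
      have := Nat.le_mul_of_pos_right i hn3
      omega
    rw [← hcoh i _ hlt, h i]
    simp only [List.append_assoc]
    rw [List.getElem?_append_right (Nat.le_add_right _ _)]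
    rw [show u2.length + (w2.length + t + i * v2.length) - u2.length
        = i * v2.length + (w2.length + t) from by omega]
    rw [List.getElem?_append_right (by rw [CombAux.wpow_length]; omega)]
    rw [CombAux.wpow_length]
    rw [show i * v2.length + (w2.length + t) - i * v2.length = w2.length + t from by omega]
    rw [List.getElem?_append_right (Nat.le_add_right _ _)]
    rw [show w2.length + t - w2.length = t from by omega]
    rw [List.getElem?_append_left (by
      rw [CombAux.wpow_length]
      have := Nat.le_mul_of_pos_right i hn3; omega)]
    exact CombAux.getElem?_wpow x2 _ t (by have := Nat.le_mul_of_pos_right i hn3; omega)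
  -- w2 matches the limit sequence
  have hW2 : ∀ j, j < w2.length → w2[j]? = CombAux.seqa u1 v1 (u2.length + j) := by
    intro j hj
    have hI : CombAux.seqa u1 v1 (u2.length + j)
        = CombAux.seqa u1 v1 (u2.length + (j + (u2.length + j + 1) * v2.length)) :=
      (hper2 j (u2.length + j + 1)).symm
    rw [hI]
    set i := u2.length + j + 1 with hi_def
    have hlt : u2.length + (j + i * v2.length) < u1.length + i * v1.length := by
      rw [hlen, Nat.mul_add]
      have := Nat.le_mul_of_pos_right i hn3
      omega
    rw [← hcoh i _ hlt, h i]
    simp only [List.append_assoc]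
    rw [List.getElem?_append_right (Nat.le_add_right _ _)]
    rw [show u2.length + (j + i * v2.length) - u2.length = i * v2.length + j from by omega]
    rw [List.getElem?_append_right (by rw [CombAux.wpow_length]; omega)]
    rw [CombAux.wpow_length]
    rw [show i * v2.length + j - i * v2.length = j from by omega]
    rw [List.getElem?_append_left hj]
  -- eventual periods
  have hPer1 : CombAux.IsPer (CombAux.seqa u1 v1) v1.length u1.length := by
    intro n hn
    obtain ⟨t, rfl⟩ := Nat.exists_eq_add_of_le hn
    rw [show u1.length + t + v1.length = u1.length + (t + v1.length) from by omega,
        hA1 (t + v1.length), hA1 t, Nat.add_mod_right]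
  have hPer2 : CombAux.IsPer (CombAux.seqa u1 v1) v2.length u2.length := by
    intro n hn
    obtain ⟨t, rfl⟩ := Nat.exists_eq_add_of_le hn
    rw [show u2.length + t + v2.length = u2.length + (t + v2.length) from by omega,
        hA2 (t + v2.length), hA2 t, Nat.add_mod_right]
  have hPer3 : CombAux.IsPer (CombAux.seqa u1 v1) x2.length (u2.length + w2.length) := by
    intro n hn
    obtain ⟨t, rfl⟩ := Nat.exists_eq_add_of_le hn
    rw [show u2.length + w2.length + t + x2.length
        = u2.length + (w2.length + (t + x2.length)) from by omega,
        show u2.length + w2.length + t = u2.length + (w2.length + t) from by omega,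
        hA3 (t + x2.length), hA3 t, Nat.add_mod_right]
  -- the combined period g
  obtain ⟨g, hg_eq⟩ : ∃ g, g = Nat.gcd v1.length (Nat.gcd v2.length x2.length) := ⟨_, rfl⟩
  have hg : 0 < g := by rw [hg_eq]; exact Nat.gcd_pos_of_pos_left _ hn1
  have hgdvd1 : g ∣ v1.length := by rw [hg_eq]; exact Nat.gcd_dvd_left _ _
  have hgdvd2 : g ∣ v2.length := by
    rw [hg_eq]; exact (Nat.gcd_dvd_right _ _).trans (Nat.gcd_dvd_left _ _)
  have hgdvd3 : g ∣ x2.length := by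
    rw [hg_eq]; exact (Nat.gcd_dvd_right _ _).trans (Nat.gcd_dvd_right _ _)
  have hPerg : CombAux.IsPer (CombAux.seqa u1 v1) g
      (u1.length + u2.length + w2.length) := by
    rw [hg_eq]
    refine CombAux.isPer_gcd _ _ (CombAux.isPer_mono hPer1 (by omega)) ?_
    exact CombAux.isPer_gcd _ _ (CombAux.isPer_mono hPer2 (by omega))
      (CombAux.isPer_mono hPer3 (by omega))
  -- g is a period from position u2.length on
  have hC1 : ∀ t : ℕ, CombAux.seqa u1 v1 (u2.length + t + g)
      = CombAux.seqa u1 v1 (u2.length + t) := by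
    intro t
    have h1 := (hper2 (t + g) (u1.length + u2.length + w2.length)).symm
    have h2 := hPerg (u2.length + t + (u1.length + u2.length + w2.length) * v2.length)
      (by have := Nat.le_mul_of_pos_right (u1.length + u2.length + w2.length) hn2; omega)
    have h3 := hper2 t (u1.length + u2.length + w2.length)
    rw [show u2.length + t + g = u2.length + (t + g) from by omega, h1,
        show u2.length + (t + g + (u1.length + u2.length + w2.length) * v2.length)
           = u2.length + t + (u1.length + u2.length + w2.length) * v2.length + g from by omega,
        h2,
        show u2.length + t + (u1.length + u2.length + w2.length) * v2.length
           = u2.length + (t + (u1.length + u2.length + w2.length) * v2.length) from by omega,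
        h3]
  have hC1iter : ∀ K t : ℕ, CombAux.seqa u1 v1 (u2.length + (t + K * g))
      = CombAux.seqa u1 v1 (u2.length + t) := by
    intro K
    induction K with
    | zero => intro t; simp
    | succ K ih =>
      intro t
      rw [show t + (K + 1) * g = t + g + K * g from by
            have : (K + 1) * g = K * g + g := by ring
            omega,
          ih (t + g), show u2.length + (t + g) = u2.length + t + g from by omega, hC1 t]
  -- the basic block z
  obtain ⟨z, hz_def⟩ : ∃ z : List B, z = v2.take g := ⟨_, rfl⟩
  have hzlen : z.length = g := by
    rw [hz_def, List.length_take]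
    have := Nat.le_of_dvd hn2 hgdvd2
    omega
  have hZ2 : ∀ t : ℕ, CombAux.seqa u1 v1 (u2.length + t) = z[t % g]? := by
    intro t
    have e1 : CombAux.seqa u1 v1 (u2.length + t)
        = CombAux.seqa u1 v1 (u2.length + t % g) := by
      conv_lhs => rw [← Nat.mod_add_div' t g]
      exact hC1iter (t / g) (t % g)
    rw [e1, hA2 (t % g),
      Nat.mod_eq_of_lt (by
        have := Nat.le_of_dvd hn2 hgdvd2
        have := Nat.mod_lt t hg
        omega),
      hz_def, List.getElem?_take, if_pos (Nat.mod_lt t hg)]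
  -- v2 is a power of z
  have hV2pat : ∀ j, j < v2.length → v2[j]? = z[j % g]? := by
    intro j hj
    have e := hA2 j
    rw [Nat.mod_eq_of_lt hj] at e
    rw [← e, hZ2]
  have hv2rec : v2 = wpow z (v2.length / g) := by
    have := CombAux.recon z g hzlen hg (v2.length / g) v2 0 (by omega)
      (by rw [Nat.add_zero, Nat.div_mul_cancel hgdvd2]) (fun j hj => hV2pat j hj)
    simpa using this
  -- w2 decomposes along z
  have hW2rec : w2 = wpow z (w2.length / g) ++ z.take (w2.length % g) :=
    CombAux.recon z g hzlen hg (w2.length / g) w2 (w2.length % g)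
      (le_of_lt (Nat.mod_lt _ hg)) (Nat.div_add_mod' w2.length g).symm
      (fun j hj => by rw [hW2 j hj, hZ2])
  -- x2 is a power of the rotated block
  have hs_lt : w2.length % g < g := Nat.mod_lt _ hg
  have hX2pat : ∀ j, j < x2.length →
      x2[j]? = (z.drop (w2.length % g) ++ z.take (w2.length % g))[j % g]? := by
    intro j hj
    have e1 := hA3 j
    rw [Nat.mod_eq_of_lt hj] at e1
    rw [← e1, hZ2,
      CombAux.rot_getElem? z g (w2.length % g) hzlen hs_lt (j % g) (Nat.mod_lt _ hg)]
    rw [show (w2.length + j) % g = (w2.length % g + j % g) % g from by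
      rw [Nat.mod_add_mod, Nat.add_mod_mod]]
  have hzh_len : (z.drop (w2.length % g) ++ z.take (w2.length % g)).length = g := by
    rw [List.length_append, List.length_drop, List.length_take, hzlen]
    omega
  have hx2rec : x2 = wpow (z.drop (w2.length % g) ++ z.take (w2.length % g))
      (x2.length / g) := by
    have := CombAux.recon _ g hzh_len hg (x2.length / g) x2 0 (by omega)
      (by rw [Nat.add_zero, Nat.div_mul_cancel hgdvd3]) (fun j hj => hX2pat j hj)
    simpa using this
  -- v1 decomposes along z with a phase shift c
  obtain ⟨c, hc_eq⟩ : ∃ c, c = (u1.length + u2.length * v1.length - u2.length) % g :=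
    ⟨_, rfl⟩
  have hc_lt : c < g := by rw [hc_eq]; exact Nat.mod_lt _ hg
  have hV1pat : ∀ j, j < v1.length → v1[j]? = z[(j + c) % g]? := by
    intro j hj
    have e0 : v1[j]? = v1[(j + u2.length * v1.length) % v1.length]? := by
      rw [Nat.add_mul_mod_self_right, Nat.mod_eq_of_lt hj]
    rw [e0, ← hA1 (j + u2.length * v1.length)]
    rw [show u1.length + (j + u2.length * v1.length)
        = u2.length + (u1.length + u2.length * v1.length - u2.length + j) from by
          have := Nat.le_mul_of_pos_right u2.length hn1; omega]
    rw [hZ2]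
    rw [show (u1.length + u2.length * v1.length - u2.length + j) % g = (j + c) % g from by
      rw [hc_eq,
        Nat.add_comm j ((u1.length + u2.length * v1.length - u2.length) % g),
        Nat.mod_add_mod]]
  have hm1 : 1 ≤ v1.length / g := (Nat.one_le_div_iff hg).mpr (Nat.le_of_dvd hn1 hgdvd1)
  have hv1rec : v1 = z.drop c ++ (wpow z (v1.length / g - 1) ++ z.take c) :=
    CombAux.recon3 z g hzlen hg (v1.length / g) c hc_lt hm1 v1
      (by rw [Nat.div_mul_cancel hgdvd1]) hV1pat
  have hm_eq : v1.length / g = v2.length / g + x2.length / g := by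
    rw [hlen, Nat.add_div_of_dvd_right hgdvd2]
  -- abstract the numeric parameters
  obtain ⟨m, hm_def⟩ : ∃ m, m = v1.length / g := ⟨_, rfl⟩
  obtain ⟨m2, hm2_def⟩ : ∃ m2, m2 = v2.length / g := ⟨_, rfl⟩
  obtain ⟨m3, hm3_def⟩ : ∃ m3, m3 = x2.length / g := ⟨_, rfl⟩
  obtain ⟨e, he_def⟩ : ∃ e, e = w2.length / g := ⟨_, rfl⟩
  obtain ⟨s, hs_def⟩ : ∃ s, s = w2.length % g := ⟨_, rfl⟩
  rw [← hm_def] at hv1rec hm1 hm_eq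
  rw [← hm2_def] at hv2rec hm_eq
  rw [← hm3_def] at hx2rec hm_eq
  rw [← he_def] at hW2rec
  rw [← hs_def] at hW2rec hx2rec hs_lt
  -- the key power identity for v1
  have hG1 : ∀ i : ℕ, wpow v1 (i + 1)
      = z.drop c ++ (wpow z (m * (i + 1) - 1) ++ z.take c) := by
    intro i
    induction i with
    | zero =>
      have h0 : wpow v1 1 = v1 := by simp [wpow]
      rw [h0, Nat.mul_one, hv1rec]
    | succ i ih =>
      have hstep : wpow v1 (i + 1 + 1) = v1 ++ wpow v1 (i + 1) := rfl
      rw [hstep, ih, hv1rec]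
      simp only [List.append_assoc]
      congr 1
      rw [← List.append_assoc (z.take c) (z.drop c), List.take_append_drop]
      rw [← List.append_assoc (wpow z (m - 1)) z, CombAux.wpow_sub_one_append z m hm1]
      rw [CombAux.assemble2]
      rw [show m + (m * (i + 1) - 1) = m * (i + 1 + 1) - 1 from by
        have e4 : m * (i + 1 + 1) = m * (i + 1) + m := by ring
        have e5 : 0 < m * (i + 1) := Nat.mul_pos hm1 (by omega)
        omega]
  -- conclusion
  refine ⟨z, List.ne_nil_of_length_pos (by omega),
    (z.drop c ++ wpow z (m - 1), z.take c),
    (wpow z (m + e), z.take s), ?_⟩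
  intro i hi
  obtain ⟨i', rfl⟩ : ∃ i', i = i' + 1 := ⟨i - 1, by omega⟩
  refine ⟨m * i', ?_, ?_⟩
  · rw [hG1 i']
    unfold capp
    simp only [List.append_assoc]
    rw [CombAux.assemble2]
    rw [show m - 1 + m * i' = m * (i' + 1) - 1 from by
      have e8 : m * (i' + 1) = m * i' + m := by ring
      omega]
  · rw [hv2rec, hW2rec, hx2rec, CombAux.wpow_wpow, CombAux.wpow_wpow]
    unfold capp
    simp only [List.append_assoc]
    rw [CombAux.shift_pow z s (by omega) ((i' + 1) * m3)]
    rw [CombAux.assemble3, CombAux.assemble2]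
    rw [show (i' + 1) * m2 + e + (i' + 1) * m3 = m + e + m * i' from by
      have e10 : (i' + 1) * m2 = i' * m2 + m2 := by ring
      have e11 : (i' + 1) * m3 = i' * m3 + m3 := by ring
      have e12 : m * i' = i' * m2 + i' * m3 := by rw [hm_eq]; ring
      omega]
end

section
/- Let c, d, e be contexts on B with |e| > 0, and let x, x' be nonempty primitive words over B. If x and x' are conjugate and the triple (c, d, e) is x-commuting, then (c, d, e) is x'-commuting. -/
section Aux
variable {B : Type*}

theorem aux_wpow_length (x : List B) (n : ℕ) : (wpow x n).length = n * x.length := by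
  induction n with
  | zero => simp [wpow]
  | succ n ih => simp [wpow, ih]; ring

theorem aux_wpow_add (x : List B) (a b : ℕ) : wpow x (a + b) = wpow x a ++ wpow x b := by
  induction a with
  | zero => simp [wpow]
  | succ a ih => rw [Nat.succ_add, wpow, ih, wpow, List.append_assoc]

theorem aux_rot_pow (n : ℕ) (t1 t2 : List B) :
    wpow (t1 ++ t2) n ++ t1 = t1 ++ wpow (t2 ++ t1) n := by
  induction n with
  | zero => simp [wpow]
  | succ n ih => simp only [wpow, List.append_assoc, ih]

theorem aux_wpow_comm (x : List B) (n : ℕ) : x ++ wpow x n = wpow x n ++ x := by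
  have := aux_rot_pow n x ([] : List B)
  simpa using this.symm

theorem aux_conj_shift (n : ℕ) (t1 t2 : List B) :
    wpow (t1 ++ t2) (n + 1) = t1 ++ wpow (t2 ++ t1) n ++ t2 := by
  have h1 : wpow (t1 ++ t2) (n + 1) = wpow (t1 ++ t2) n ++ (t1 ++ t2) := by
    rw [wpow, aux_wpow_comm]
  rw [h1, ← List.append_assoc, aux_rot_pow, List.append_assoc]

theorem aux_comm_words : ∀ N (u v : List B), u.length + v.length ≤ N → u ++ v = v ++ u →
    ∃ (z : List B) (i j : ℕ), u = wpow z i ∧ v = wpow z j := by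
  intro N
  induction N with
  | zero =>
    intro u v hl _
    have hu : u = [] := List.eq_nil_of_length_eq_zero (by omega)
    have hv : v = [] := List.eq_nil_of_length_eq_zero (by omega)
    exact ⟨[], 0, 0, by simp [hu, wpow], by simp [hv, wpow]⟩
  | succ N ih =>
    intro u v hl h
    rcases eq_or_ne u [] with rfl | hu
    · exact ⟨v, 0, 1, by simp [wpow], by simp [wpow]⟩
    rcases eq_or_ne v [] with rfl | hv
    · exact ⟨u, 1, 0, by simp [wpow], by simp [wpow]⟩
    have hul : 0 < u.length := List.length_pos_iff.mpr hu
    have hvl : 0 < v.length := List.length_pos_iff.mpr hv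
    rcases le_total u.length v.length with hle | hle
    · have hpre : u <+: v := by
        refine List.prefix_of_prefix_length_le ?_ (List.prefix_append v u) hle
        rw [← h]; exact List.prefix_append u v
      obtain ⟨w, rfl⟩ := hpre
      have h2 : u ++ w = w ++ u := by
        apply List.append_cancel_left (as := u)
        simpa [List.append_assoc] using h
      obtain ⟨z, i, j, hu', hw'⟩ := ih u w (by simp at hl ⊢; omega) h2
      exact ⟨z, i, i + j, hu', by rw [aux_wpow_add, hu', hw']⟩
    · have hpre : v <+: u := by
        refine List.prefix_of_prefix_length_le ?_ (List.prefix_append u v) hle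
        rw [h]; exact List.prefix_append v u
      obtain ⟨w, rfl⟩ := hpre
      have h2 : v ++ w = w ++ v := by
        apply List.append_cancel_left (as := v)
        simpa [List.append_assoc] using h.symm
      obtain ⟨z, i, j, hv', hw'⟩ := ih v w (by simp at hl ⊢; omega) h2
      exact ⟨z, i + j, i, by rw [aux_wpow_add, hv', hw'], hv'⟩

theorem aux_prim_no_comm (x u : List B) (hx : Primitive x) (hlt : u.length < x.length)
    (hne : u ≠ []) (h : u ++ x = x ++ u) : False := by
  obtain ⟨z, i, j, hu, hxz⟩ := aux_comm_words (u.length + x.length) u x le_rfl h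
  have hj : 1 ≤ j := by
    rcases Nat.eq_zero_or_pos j with rfl | hj
    · exact ((hx.1) (by simpa [wpow] using hxz)).elim
    · exact hj
  have hj1 := hx.2 z j hj hxz
  subst hj1
  have hxz' : x = z := by simpa [wpow] using hxz
  have hi : 1 ≤ i := by
    rcases Nat.eq_zero_or_pos i with rfl | hi
    · simp [wpow] at hu; exact absurd hu hne
    · exact hi
  have : z.length ≤ u.length := by
    rw [hu, aux_wpow_length]
    calc z.length = 1 * z.length := (one_mul _).symm
    _ ≤ i * z.length := Nat.mul_le_mul_right _ hi
  rw [hxz'] at hlt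
  omega

theorem aux_wpow_take (x : List B) (N q r : ℕ) (hr : r ≤ x.length) (hq : q + 1 ≤ N) :
    (wpow x N).take (q * x.length + r) = wpow x q ++ x.take r := by
  have hsplit : wpow x N = wpow x q ++ (x ++ wpow x (N - (q + 1))) := by
    conv_lhs => rw [show N = q + (1 + (N - (q + 1))) by omega]
    rw [aux_wpow_add, aux_wpow_add]
    simp [wpow]
  rw [hsplit, show q * x.length + r = (wpow x q).length + r by rw [aux_wpow_length],
    List.take_length_add_append, List.take_append_of_le_length hr]

theorem aux_take_wpow_len (x : List B) (n : ℕ) (hn : 1 ≤ n) :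
    (wpow x n).take x.length = x := by
  obtain ⟨n, rfl⟩ : ∃ m, n = m + 1 := ⟨n - 1, by omega⟩
  rw [wpow, List.take_append_of_le_length le_rfl, List.take_length]

theorem aux_x_prefix_wpow (x : List B) (n : ℕ) (hn : 1 ≤ n) : x <+: wpow x n := by
  obtain ⟨n, rfl⟩ : ∃ m, n = m + 1 := ⟨n - 1, by omega⟩
  rw [wpow]; exact List.prefix_append x _

theorem aux_x_suffix_wpow (x : List B) (n : ℕ) (hn : 1 ≤ n) : x <:+ wpow x n := by
  obtain ⟨n, rfl⟩ : ∃ m, n = m + 1 := ⟨n - 1, by omega⟩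
  rw [wpow, aux_wpow_comm]; exact List.suffix_append _ x

theorem aux_iterE1 {e1 f1 x : List B} {q : ℕ} (h : e1 ++ f1 = f1 ++ wpow x q) :
    ∀ j, wpow e1 j ++ f1 = f1 ++ wpow x (j * q) := by
  intro j; induction j with
  | zero => simp [wpow]
  | succ j ih =>
    calc wpow e1 (j+1) ++ f1 = e1 ++ (wpow e1 j ++ f1) := by simp [wpow, List.append_assoc]
    _ = e1 ++ (f1 ++ wpow x (j*q)) := by rw [ih]
    _ = (e1 ++ f1) ++ wpow x (j*q) := by simp [List.append_assoc]
    _ = f1 ++ (wpow x q ++ wpow x (j*q)) := by rw [h]; simp [List.append_assoc]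
    _ = f1 ++ wpow x ((j+1)*q) := by rw [← aux_wpow_add, show q + j*q = (j+1)*q by ring]

theorem aux_iterE2 {e2 f2 x : List B} {q : ℕ} (h : f2 ++ e2 = wpow x q ++ f2) :
    ∀ j, f2 ++ wpow e2 j = wpow x (j * q) ++ f2 := by
  intro j; induction j with
  | zero => simp [wpow]
  | succ j ih =>
    calc f2 ++ wpow e2 (j+1) = (f2 ++ e2) ++ wpow e2 j := by simp [wpow, List.append_assoc]
    _ = wpow x q ++ (f2 ++ wpow e2 j) := by rw [h]; simp [List.append_assoc]
    _ = wpow x q ++ (wpow x (j*q) ++ f2) := by rw [ih]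
    _ = wpow x ((j+1)*q) ++ f2 := by
        rw [show (j+1)*q = q + j*q by ring, aux_wpow_add]; simp [List.append_assoc]

end Aux

theorem conjugate_com_of_com {B : Type*} (c d e : List B × List B)
    (he : 0 < clen e) (x x' : List B)
    (hx : Primitive x) (hx' : Primitive x')
    (hconj : Conj x x') (hcom : XCommuting c d e x) :
    XCommuting c d e x' := by
  classical
  obtain ⟨f, hf⟩ := hcom
  have hxne : x ≠ [] := hx.1
  have hX : 0 < x.length := List.length_pos_iff.mpr hxne
  -- rotation offset
  obtain ⟨δ, hδlt, hδ⟩ : ∃ δ, δ < x.length ∧ x' = x.drop δ ++ x.take δ := by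
    obtain ⟨t1, t2, hx1, hx2⟩ := hconj
    rcases eq_or_ne t2 [] with rfl | ht2
    · refine ⟨0, hX, ?_⟩
      simp only [List.append_nil] at hx1
      simp [hx2, hx1]
    · refine ⟨t1.length, ?_, ?_⟩
      · rw [hx1, List.length_append]
        have := List.length_pos_iff.mpr ht2
        omega
      · rw [hx1, hx2, List.take_left, List.drop_left]
  -- rotation keys
  have keyA : ∀ n, wpow x n ++ x.take δ = x.take δ ++ wpow x' n := by
    intro n
    have h := aux_rot_pow n (x.take δ) (x.drop δ)
    rw [List.take_append_drop] at h
    rw [hδ]; exact h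
  have keyB : ∀ n, x.drop δ ++ wpow x n = wpow x' n ++ x.drop δ := by
    intro n
    have h := aux_rot_pow n (x.drop δ) (x.take δ)
    rw [List.take_append_drop] at h
    rw [hδ]; exact h.symm
  have keyC : ∀ n, wpow x (n + 1) = x.take δ ++ wpow x' n ++ x.drop δ := by
    intro n
    have h := aux_conj_shift n (x.take δ) (x.drop δ)
    rw [List.take_append_drop] at h
    rw [hδ]; exact h
  -- normal form of the words
  obtain ⟨M, hM⟩ : ∃ M : List B, M = d.1 ++ (c.1 ++ (c.2 ++ d.2)) := ⟨_, rfl⟩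
  have hw : ∀ i, capp (cmul (cpow e i) (cmul d c)) [] = wpow e.1 i ++ (M ++ wpow e.2 i) := by
    intro i; rw [hM]; simp [capp, cmul, cpow, List.append_assoc]
  have hf' : ∀ i, 1 ≤ i → ∃ k, wpow e.1 i ++ (M ++ wpow e.2 i) = f.1 ++ (wpow x k ++ f.2) := by
    intro i hi
    obtain ⟨k, hk⟩ := hf i hi
    rw [hw i] at hk
    exact ⟨k, by simpa [capp, List.append_assoc] using hk⟩
  have hlen : ∀ i k, wpow e.1 i ++ (M ++ wpow e.2 i) = f.1 ++ (wpow x k ++ f.2) →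
      i * e.1.length + M.length + i * e.2.length = f.1.length + k * x.length + f.2.length := by
    intro i k h
    have h2 := congrArg List.length h
    simp only [List.length_append, aux_wpow_length] at h2
    linarith
  obtain ⟨k1, hk1⟩ := hf' 1 le_rfl
  have l1 := hlen 1 k1 hk1
  rcases Nat.eq_zero_or_pos k1 with hk10 | hk1pos
  · -- BAD CASE : k1 = 0
    subst hk10
    have hw1 : e.1 ++ (M ++ e.2) = f.1 ++ f.2 := by
      simpa [wpow] using hk1
    obtain ⟨m, hk2⟩ := hf' 2 (by omega)
    have l2 := hlen 2 m hk2
    have hm : e.1.length + e.2.length = m * x.length := by linarith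
    have hm1 : 1 ≤ m := by
      rcases Nat.eq_zero_or_pos m with rfl | h
      · exfalso
        have he' : 0 < e.1.length + e.2.length := he
        simp at hm; omega
      · exact h
    have hlenwp : ∀ a b : ℕ, 1 ≤ b → a ≤ ((a + 1) * b) * x.length := by
      intro a b hb
      calc a ≤ a + 1 := by omega
      _ ≤ (a+1) * b := Nat.le_mul_of_pos_right _ hb
      _ ≤ (a+1) * b * x.length := Nat.le_mul_of_pos_right _ hX
    have hH : ∀ i : ℕ, wpow e.1 (i+1) ++ (M ++ wpow e.2 (i+1)) = f.1 ++ (wpow x (i*m) ++ f.2) := by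
      intro i
      obtain ⟨k, hk⟩ := hf' (i+1) (by omega)
      have li := hlen _ _ hk
      have hkeq : k = i * m := by
        have h2 : (i+1) * e.1.length + (i+1) * e.2.length
            = i * (e.1.length + e.2.length) + (e.1.length + e.2.length) := by ring
        have h3 : i * (e.1.length + e.2.length) = (i*m) * x.length := by rw [hm]; ring
        have h4 : k * x.length = (i*m) * x.length := by linarith
        exact Nat.eq_of_mul_eq_mul_right hX h4
      rw [hkeq] at hk
      exact hk
    have hstep : ∀ n : ℕ, e.1 ++ ((wpow e.1 (n+1) ++ (M ++ wpow e.2 (n+1))) ++ e.2)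
        = wpow e.1 (n+2) ++ (M ++ wpow e.2 (n+2)) := by
      intro n
      have h1 : wpow e.1 (n+2) = e.1 ++ wpow e.1 (n+1) := rfl
      have h2 : wpow e.2 (n+2) = wpow e.2 (n+1) ++ e.2 := by rw [wpow, aux_wpow_comm]
      rw [h1, h2]; simp [List.append_assoc]
    have hR : ∀ n : ℕ, e.1 ++ ((f.1 ++ (wpow x (n*m) ++ f.2)) ++ e.2)
        = f.1 ++ (wpow x ((n+1)*m) ++ f.2) := by
      intro n
      rw [← hH n, hstep n, hH (n+1)]
    -- Step 2 : structure of e.1 and e.2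
    obtain ⟨q0, r, hqr, hrX⟩ : ∃ q0 r, q0 * x.length + r = e.1.length ∧ r < x.length :=
      ⟨e.1.length / x.length, e.1.length % x.length,
        by rw [Nat.mul_comm]; exact Nat.div_add_mod _ _, Nat.mod_lt _ hX⟩
    have hq0L : q0 ≤ e.1.length := by
      have := Nat.le_mul_of_pos_right q0 hX
      linarith
    have hq0m : q0 ≤ m := by
      refine Nat.le_of_mul_le_mul_right ?_ hX
      linarith
    obtain ⟨s, hs⟩ : ∃ s, m = q0 + s := ⟨m - q0, by omega⟩
    obtain ⟨N, hN⟩ : ∃ N : ℕ, N = e.1.length + 2 := ⟨_, rfl⟩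
    have hRN' : (e.1 ++ f.1) ++ ((wpow x (N*m) ++ f.2) ++ e.2)
        = f.1 ++ (wpow x ((N+1)*m) ++ f.2) := by
      rw [← hR N]; simp [List.append_assoc]
    have hPX : e.1.length ≤ (wpow x ((N+1)*m)).length := by
      rw [aux_wpow_length]
      calc e.1.length ≤ N + 1 := by omega
      _ ≤ (N+1) * m := Nat.le_mul_of_pos_right _ hm1
      _ ≤ (N+1) * m * x.length := Nat.le_mul_of_pos_right _ hX
    have ha := congrArg (List.take (e.1.length + f.1.length)) hRN'
    rw [show e.1.length + f.1.length = (e.1 ++ f.1).length by simp] at ha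
    rw [List.take_left] at ha
    rw [show ((e.1 ++ f.1).length : ℕ) = f.1.length + e.1.length by simp [Nat.add_comm]] at ha
    rw [List.take_length_add_append] at ha
    rw [List.take_append_of_le_length hPX] at ha
    rw [← hqr] at ha
    rw [aux_wpow_take x ((N+1)*m) q0 r (le_of_lt hrX) (by
      have := Nat.le_mul_of_pos_right (N+1) hm1
      linarith)] at ha
    -- ha : e.1 ++ f.1 = f.1 ++ (wpow x q0 ++ x.take r)
    rw [ha] at hRN'
    have hQ : (N+1)*m = q0 + (N*m + s) := by rw [hs]; ring
    rw [hQ, aux_wpow_add, aux_wpow_add] at hRN'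
    have hRN'' : f.1 ++ (wpow x q0 ++ (x.take r ++ (wpow x (N*m) ++ (f.2 ++ e.2))))
        = f.1 ++ (wpow x q0 ++ (wpow x (N*m) ++ (wpow x s ++ f.2))) := by
      simpa [List.append_assoc] using hRN'
    have hmid := List.append_cancel_left (List.append_cancel_left hRN'')
    have hNm2 : 2 ≤ N * m := by
      calc (2:ℕ) = 2 * 1 := by ring
      _ ≤ N * m := Nat.mul_le_mul (by omega) hm1
    have hr0 : r = 0 := by
      by_contra hr
      have hrpos : 0 < r := Nat.pos_of_ne_zero hr
      have hlt : (x.take r).length = r := by rw [List.length_take]; omega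
      have hXle : x.length ≤ (wpow x (N*m)).length := by
        rw [aux_wpow_length]
        have := Nat.le_mul_of_pos_left x.length (show 0 < N*m by linarith)
        linarith
      have lhs_eq : (x.take r ++ (wpow x (N*m) ++ (f.2 ++ e.2))).take (r + x.length)
          = x.take r ++ x := by
        rw [show r + x.length = (x.take r).length + x.length by rw [hlt],
          List.take_length_add_append, List.take_append_of_le_length hXle,
          aux_take_wpow_len x (N*m) (by linarith)]
      have h2Xle : r + x.length ≤ (wpow x (N*m)).length := by
        rw [aux_wpow_length]
        have := Nat.mul_le_mul_right x.length hNm2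
        linarith
      have rhs_eq : (wpow x (N*m) ++ (wpow x s ++ f.2)).take (r + x.length)
          = x ++ x.take r := by
        rw [List.take_append_of_le_length h2Xle,
          show r + x.length = 1 * x.length + r by ring,
          aux_wpow_take x (N*m) 1 r (le_of_lt hrX) hNm2]
        simp [wpow]
      have hcomm : x.take r ++ x = x ++ x.take r := by
        rw [← lhs_eq, ← rhs_eq, hmid]
      exact aux_prim_no_comm x (x.take r) hx (by omega)
        (by intro hnil; rw [hnil] at hlt; simp at hlt; omega) hcomm
    subst hr0
    simp only [List.take_zero, List.append_nil, List.nil_append, Nat.add_zero] at ha hmid hqr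
    have hE2 : f.2 ++ e.2 = wpow x s ++ f.2 := List.append_cancel_left hmid
    -- Step 3 : the cut disjunction
    have hdisj : x.take δ <+: f.2 ∨ x.drop δ <:+ f.1 := by
      rcases Nat.eq_zero_or_pos s with hs0 | hspos
      · -- s = 0, so q0 = m ≥ 1
        have hq0pos : 1 ≤ q0 := by omega
        by_cases hcase : x.length ≤ f.1.length + δ
        · right
          have hsufpow : f.1 <:+ wpow x ((f.1.length + 1) * q0) := by
            have h := aux_iterE1 ha (f.1.length + 1)
            have h1 : f.1 <:+ wpow e.1 (f.1.length+1) ++ f.1 := List.suffix_append _ _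
            rw [h] at h1
            refine List.suffix_of_suffix_length_le h1 (List.suffix_append _ _) ?_
            rw [aux_wpow_length]; exact hlenwp _ _ hq0pos
          refine List.suffix_of_suffix_length_le ?_ hsufpow ?_
          · exact (List.drop_suffix δ x).trans
              (aux_x_suffix_wpow x _ (Nat.mul_pos (by omega) hq0pos))
          · rw [List.length_drop]; omega
        · left
          push_neg at hcase
          have h1 : f.1 ++ x.take δ <+: f.1 ++ wpow x q0 :=
            (List.prefix_append_right_inj f.1).mpr
              ((List.take_prefix δ x).trans (aux_x_prefix_wpow x q0 hq0pos))
          rw [← ha] at h1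
          have h2 : f.1 ++ x.take δ <+: e.1 := by
            refine List.prefix_of_prefix_length_le h1 (List.prefix_append _ _) ?_
            rw [List.length_append, List.length_take, Nat.min_eq_left (le_of_lt hδlt)]
            have hq0X : x.length ≤ q0 * x.length := Nat.le_mul_of_pos_left _ hq0pos
            linarith
          have h3 : e.1 <+: f.1 ++ f.2 := by
            rw [← hw1]; exact List.prefix_append _ _
          exact (List.prefix_append_right_inj f.1).mp (h2.trans h3)
      · -- s ≥ 1
        by_cases hcase : δ ≤ f.2.length
        · left
          have hprepow : f.2 <+: wpow x ((f.2.length + 1) * s) := by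
            have h := aux_iterE2 hE2 (f.2.length + 1)
            have h1 : f.2 <+: f.2 ++ wpow e.2 (f.2.length+1) := List.prefix_append _ _
            rw [h] at h1
            refine List.prefix_of_prefix_length_le h1 (List.prefix_append _ _) ?_
            rw [aux_wpow_length]; exact hlenwp _ _ hspos
          refine List.prefix_of_prefix_length_le ?_ hprepow ?_
          · exact (List.take_prefix δ x).trans
              (aux_x_prefix_wpow x _ (Nat.mul_pos (by omega) hspos))
          · rw [List.length_take]; omega
        · right
          push_neg at hcase
          have hf2s : f.2.length ≤ (wpow x s).length := by
            rw [aux_wpow_length]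
            have : x.length ≤ s * x.length := Nat.le_mul_of_pos_left _ hspos
            linarith
          have e2eq : e.2 = (wpow x s).drop f.2.length ++ f.2 := by
            have h := congrArg (List.drop f.2.length) hE2
            rw [List.drop_left] at h
            rw [List.drop_append_of_le_length hf2s] at h
            exact h
          have hf1eq : f.1 = e.1 ++ (M ++ (wpow x s).drop f.2.length) := by
            have h : f.1 ++ f.2 = (e.1 ++ (M ++ (wpow x s).drop f.2.length)) ++ f.2 := by
              rw [← hw1, e2eq]; simp [List.append_assoc]
            exact List.append_cancel_right h
          have hsufs : (wpow x s).drop f.2.length <:+ f.1 :=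
            ⟨e.1 ++ M, by rw [hf1eq]; simp [List.append_assoc]⟩
          refine (List.suffix_of_suffix_length_le ?_ (List.drop_suffix _ _) ?_).trans hsufs
          · exact (List.drop_suffix δ x).trans (aux_x_suffix_wpow x s hspos)
          · rw [List.length_drop, List.length_drop, aux_wpow_length]
            have h1 : x.length ≤ s * x.length := Nat.le_mul_of_pos_left _ hspos
            have h2 : x.length - δ ≤ x.length - f.2.length :=
              Nat.sub_le_sub_left (le_of_lt hcase) _
            have h3 : x.length - f.2.length ≤ s * x.length - f.2.length :=
              Nat.sub_le_sub_right h1 _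
            exact le_trans h2 h3
    -- Conclusion
    rcases hdisj with hpre | hsuf
    · obtain ⟨g, hg⟩ := hpre
      refine ⟨(f.1 ++ x.take δ, g), ?_⟩
      intro i hi
      obtain ⟨n, hrep⟩ := hf' i hi
      refine ⟨n, ?_⟩
      have core : f.1 ++ ((wpow x n ++ x.take δ) ++ g)
          = (f.1 ++ x.take δ) ++ (wpow x' n ++ g) := by
        rw [keyA n]; simp [List.append_assoc]
      rw [hw i, hrep, ← hg]
      simpa [capp, List.append_assoc] using core
    · obtain ⟨γ, hγ⟩ := hsuf
      refine ⟨(γ, x.drop δ ++ f.2), ?_⟩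
      intro i hi
      obtain ⟨n, hrep⟩ := hf' i hi
      refine ⟨n, ?_⟩
      have core : (γ ++ (x.drop δ ++ wpow x n)) ++ f.2
          = γ ++ ((wpow x' n ++ x.drop δ) ++ f.2) := by
        rw [keyB n]; simp [List.append_assoc]
      rw [hw i, hrep, ← hγ]
      simpa [capp, List.append_assoc] using core
  · -- EASY CASE : k1 ≥ 1
    refine ⟨(f.1 ++ x.take δ, x.drop δ ++ f.2), ?_⟩
    intro i hi
    obtain ⟨k, hk⟩ := hf' i hi
    have li := hlen i k hk
    have hkpos : 1 ≤ k := by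
      rcases Nat.eq_zero_or_pos k with rfl | h
      · exfalso
        have h1 : 1 * e.1.length ≤ i * e.1.length := Nat.mul_le_mul_right _ hi
        have h2 : 1 * e.2.length ≤ i * e.2.length := Nat.mul_le_mul_right _ hi
        have h3 : 1 * x.length ≤ k1 * x.length := Nat.mul_le_mul_right _ hk1pos
        linarith
      · exact h
    obtain ⟨k', rfl⟩ : ∃ k', k = k' + 1 := ⟨k - 1, by omega⟩
    refine ⟨k', ?_⟩
    rw [hw i, hk, keyC k']
    simp [capp, List.append_assoc]
end

section
/- Let x, y be nonempty words over B and m, n ∈ ℕ. If x^m and y^n have a common factor of length at least |x| + |y| - gcd(|x|, |y|), then the primitive roots ρ(x) and ρ(y) are conjugate. -/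
namespace FWaux
variable {B : Type*}

lemma wpow_length (x : List B) (n : ℕ) : (wpow x n).length = n * x.length := by
  induction n with
  | zero => simp [wpow]
  | succ n ih => simp [wpow, ih]; ring

lemma wpow_add (x : List B) (m n : ℕ) : wpow x (m + n) = wpow x m ++ wpow x n := by
  induction m with
  | zero => simp [wpow]
  | succ m ih => rw [Nat.succ_add]; simp [wpow, ih]

lemma wpow_mul (x : List B) (m n : ℕ) : wpow x (m * n) = wpow (wpow x m) n := by
  induction n with
  | zero => simp [wpow]
  | succ n ih =>
    have h : m * (n + 1) = m + m * n := by ring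
    rw [h, wpow_add, ih]; rfl

lemma len_pos_of_lt_wpow {x : List B} {n i : ℕ} (h : i < (wpow x n).length) : 0 < x.length := by
  rcases Nat.eq_zero_or_pos x.length with h0 | h0
  · rw [wpow_length, h0, Nat.mul_zero] at h; omega
  · exact h0

lemma wpow_getElem (x : List B) (n : ℕ) : ∀ (i : ℕ) (h : i < (wpow x n).length),
    (wpow x n)[i] = x[i % x.length]'(Nat.mod_lt _ (len_pos_of_lt_wpow h)) := by
  induction n with
  | zero => intro i h; simp [wpow] at h
  | succ n ih =>
    intro i h
    have hlen := h
    rw [wpow_length, Nat.succ_mul] at hlen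
    have hx : 0 < x.length := len_pos_of_lt_wpow h
    simp only [wpow]
    by_cases hi : i < x.length
    · rw [List.getElem_append_left hi]
      simp only [Nat.mod_eq_of_lt hi]
    · push_neg at hi
      rw [List.getElem_append_right hi]
      rw [ih (i - x.length) (by rw [wpow_length]; omega)]
      simp only [Nat.mod_eq_sub_mod hi]

/-- `w` has period `p`. -/
def Per (w : List B) (p : ℕ) : Prop :=
  ∀ (i : ℕ) (h : i + p < w.length), w[i]'(lt_of_le_of_lt (Nat.le_add_right i p) h) = w[i + p]'h

lemma per_mod {w : List B} {q : ℕ} (hq : 0 < q) (hper : Per w q) :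
    ∀ (i : ℕ) (h : i < w.length),
      w[i] = w[i % q]'(lt_of_le_of_lt (Nat.mod_le i q) h) := by
  intro i
  induction i using Nat.strong_induction_on with
  | _ i ih =>
    intro h
    by_cases hi : i < q
    · simp only [Nat.mod_eq_of_lt hi]
    · push_neg at hi
      have h1 : (i - q) + q < w.length := by omega
      have h2 := hper (i - q) h1
      have h3 : i - q + q = i := by omega
      simp only [h3] at h2
      rw [← h2, ih (i - q) (by omega) (by omega)]
      simp only [Nat.mod_eq_sub_mod hi]

lemma per_of_per_take {w : List B} {q g : ℕ} (hq : 0 < q) (hg : 0 < g) (hgq : g ∣ q)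
    (hPq : Per w q)
    (hu : Per (w.take (w.length - q)) g)
    (hqu : q ≤ w.length - q) :
    Per w g := by
  have hulen : (w.take (w.length - q)).length = w.length - q := by
    rw [List.length_take]; omega
  have key : ∀ (j : ℕ) (hj : j < w.length),
      w[j] = w[j % g]'(lt_of_le_of_lt (Nat.mod_le j g) hj) := by
    intro j hj
    have hjq : j % q < (w.take (w.length - q)).length := by
      have := Nat.mod_lt j hq; omega
    have e3 := per_mod hg hu (j % q) hjq
    simp only [List.getElem_take] at e3
    have e5 : j % q % g = j % g := Nat.mod_mod_of_dvd j hgq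
    rw [per_mod hq hPq j hj, e3]
    simp only [e5]
  intro i hig
  have k1 := key i (by omega)
  have k2 := key (i + g) hig
  rw [k1, k2]
  simp only [Nat.add_mod_right]

lemma fw_full : ∀ (N p q : ℕ) (w : List B), p + q ≤ N → 0 < p → 0 < q →
    p + q - Nat.gcd p q ≤ w.length → Per w p → Per w q → Per w (Nat.gcd p q) := by
  intro N
  induction N with
  | zero => intro p q w h hp hq _ _ _; omega
  | succ N ih =>
    have main : ∀ (p q : ℕ) (w : List B), p + q ≤ N + 1 → 0 < q → q < p →
        p + q - Nat.gcd p q ≤ w.length → Per w p → Per w q → Per w (Nat.gcd p q) := by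
      intro p q w hN hq hqp hlen hPp hPq
      have hg1 : Nat.gcd p q ∣ p := Nat.gcd_dvd_left p q
      have hg2 : Nat.gcd p q ∣ q := Nat.gcd_dvd_right p q
      have hgpos : 0 < Nat.gcd p q := Nat.gcd_pos_of_pos_right _ hq
      have hgle : Nat.gcd p q ≤ q := Nat.le_of_dvd hq hg2
      have hgeq : Nat.gcd (p - q) q = Nat.gcd p q := Nat.gcd_sub_self_left (le_of_lt hqp)
      have hulen : (w.take (w.length - q)).length = w.length - q := by
        rw [List.length_take]; omega
      have hpq1 : 0 < p - q := by omega
      have hgpq : Nat.gcd p q ∣ p - q := Nat.dvd_sub hg1 hg2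
      have hppq : Nat.gcd p q ≤ p - q := Nat.le_of_dvd hpq1 hgpq
      have hwlen : q ≤ w.length - q := by omega
      have hPuq : Per (w.take (w.length - q)) q := by
        intro i hi
        rw [hulen] at hi
        simp only [List.getElem_take]
        exact hPq i (by omega)
      have hPupq : Per (w.take (w.length - q)) (p - q) := by
        intro i hi
        rw [hulen] at hi
        have h1 : i + p < w.length := by omega
        have h2 : (i + (p - q)) + q < w.length := by omega
        have e1 := hPp i h1
        have e2 := hPq (i + (p - q)) h2
        have h3 : i + (p - q) + q = i + p := by omega
        simp only [h3] at e2
        simp only [List.getElem_take]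
        rw [e1, ← e2]
      have hlenu : (p - q) + q - Nat.gcd (p - q) q ≤ (w.take (w.length - q)).length := by
        rw [hulen, hgeq]; omega
      have hu := ih (p - q) q (w.take (w.length - q)) (by omega) hpq1 hq hlenu hPupq hPuq
      rw [hgeq] at hu
      exact per_of_per_take hq hgpos hg2 hPq hu hwlen
    intro p q w hN hp hq hlen hPp hPq
    rcases Nat.lt_trichotomy p q with h | h | h
    · rw [Nat.gcd_comm]
      exact main q p w (by omega) hp h (by rw [Nat.gcd_comm q p, Nat.add_comm q p]; exact hlen) hPq hPp
    · subst h; simpa [Nat.gcd_self] using hPp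
    · exact main p q w hN hq h hlen hPp hPq

lemma per_gcd {w : List B} {p q : ℕ} (hp : 0 < p) (hq : 0 < q)
    (hlen : p + q - Nat.gcd p q ≤ w.length) (h1 : Per w p) (h2 : Per w q) :
    Per w (Nat.gcd p q) :=
  fw_full (p + q) p q w le_rfl hp hq hlen h1 h2

lemma per_wpow (u : List B) (n : ℕ) : Per (wpow u n) u.length := by
  intro i h
  rw [wpow_getElem u n i (by omega), wpow_getElem u n (i + u.length) h]
  simp only [Nat.add_mod_right]

lemma take_wpow_of_per {w : List B} {g k : ℕ} (hg : 0 < g) (hper : Per w g)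
    (hk : k * g ≤ w.length) :
    w.take (k * g) = wpow (w.take g) k := by
  rcases Nat.eq_zero_or_pos k with hk0 | hk0
  · subst hk0; simp [wpow]
  have hgw : g ≤ w.length := le_trans (by nlinarith) hk
  apply List.ext_getElem
  · rw [List.length_take, wpow_length, List.length_take,
        Nat.min_eq_left hgw, Nat.min_eq_left hk]
  · intro i h1 h2
    have hi : i < k * g := by rw [List.length_take] at h1; omega
    have hiw : i < w.length := by omega
    have htg : (w.take g).length = g := by rw [List.length_take]; omega
    rw [List.getElem_take, wpow_getElem _ _ _ h2]
    simp only [List.getElem_take, htg]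
    exact per_mod hg hper i hiw

lemma take_wpow {u : List B} {n : ℕ} (hn : 0 < n) : (wpow u n).take u.length = u := by
  obtain ⟨n, rfl⟩ : ∃ m, n = m + 1 := ⟨n - 1, by omega⟩
  show (u ++ wpow u n).take u.length = u
  exact List.take_left

lemma wpow_nil (p : ℕ) : wpow ([] : List B) p = [] := by
  induction p with
  | zero => rfl
  | succ p ih => simp [wpow, ih]

lemma rot_getElem {u : List B} {r : ℕ} (hr : r ≤ u.length) (hu : 0 < u.length)
    (j : ℕ) (hj : j < u.length) :
    (u.drop r ++ u.take r)[j]'(by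
      rw [List.length_append, List.length_drop, List.length_take]; omega)
    = u[(j + r) % u.length]'(Nat.mod_lt _ hu) := by
  have hdl : (u.drop r).length = u.length - r := List.length_drop
  by_cases hjr : j < u.length - r
  · rw [List.getElem_append_left (by rw [hdl]; omega), List.getElem_drop]
    simp only [Nat.mod_eq_of_lt (show j + r < u.length by omega),
      Nat.add_comm r j]
  · rw [List.getElem_append_right (by rw [hdl]; omega), List.getElem_take]
    have hidx : j - (u.drop r).length = (j + r) % u.length := by
      rw [hdl, Nat.mod_eq_sub_mod (by omega), Nat.mod_eq_of_lt (by omega)]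
      omega
    simp only [hidx]

lemma conj_wpow {u t1 t2 : List B} {p : ℕ} (h : wpow u p = t1 ++ t2) :
    ∃ u', Conj u u' ∧ t2 ++ t1 = wpow u' p := by
  by_cases hu : u = []
  · subst hu
    rw [wpow_nil] at h
    obtain ⟨rfl, rfl⟩ := List.append_eq_nil_iff.mp h.symm
    exact ⟨[], ⟨[], [], by simp, by simp⟩, by rw [wpow_nil]; rfl⟩
  have hL : 0 < u.length := List.length_pos_iff.mpr hu
  refine ⟨u.drop (t1.length % u.length) ++ u.take (t1.length % u.length),
    ⟨u.take (t1.length % u.length), u.drop (t1.length % u.length),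
      (List.take_append_drop _ u).symm, rfl⟩, ?_⟩
  have hrL : t1.length % u.length ≤ u.length := le_of_lt (Nat.mod_lt _ hL)
  have hlen : t1.length + t2.length = p * u.length := by
    have h' := congrArg List.length h
    rw [wpow_length, List.length_append] at h'
    omega
  have hlen' : (u.drop (t1.length % u.length) ++ u.take (t1.length % u.length)).length
      = u.length := by
    rw [List.length_append, List.length_drop, List.length_take]; omega
  apply List.ext_getElem
  · rw [wpow_length, hlen', List.length_append]; omega
  intro i h1 h2
  have hiL : i < p * u.length := by rw [List.length_append] at h1; omega
  rw [wpow_getElem _ _ _ h2]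
  simp only [hlen']
  rw [rot_getElem hrL hL (i % u.length) (Nat.mod_lt _ hL)]
  -- goal : (t2 ++ t1)[i] = u[(i % u.length + t1.length % u.length) % u.length]
  have hidx2 : (i % u.length + t1.length % u.length) % u.length
      = (t1.length + i) % u.length := by
    rw [Nat.add_mod t1.length i, Nat.add_comm (t1.length % u.length) (i % u.length)]
  simp only [hidx2]
  by_cases hit : i < t2.length
  · rw [List.getElem_append_left hit]
    have hj : t1.length + i < (wpow u p).length := by
      rw [wpow_length]; omega
    have e := wpow_getElem u p (t1.length + i) hj
    simp only [h] at e
    rw [List.getElem_append_right (by omega)] at e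
    simp only [Nat.add_sub_cancel_left] at e
    rw [← e]
  · push_neg at hit
    rw [List.getElem_append_right hit]
    have hj : i - t2.length < (wpow u p).length := by rw [wpow_length]; omega
    have e := wpow_getElem u p (i - t2.length) hj
    simp only [h] at e
    rw [List.getElem_append_left (by rw [List.length_append] at h1; omega)] at e
    rw [e]
    have hidx3 : (i - t2.length) % u.length = (t1.length + i) % u.length := by
      have h4 : t1.length + i = (i - t2.length) + p * u.length := by omega
      rw [h4, Nat.add_mul_mod_self_right]
    simp only [hidx3]

lemma conj_refl (u : List B) : Conj u u := ⟨u, [], by simp, by simp⟩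

lemma conj_symm {u v : List B} : Conj u v → Conj v u :=
  fun ⟨a, b, h1, h2⟩ => ⟨b, a, h2, h1⟩

lemma conj_trans {u v w : List B} : Conj u v → Conj v w → Conj u w := by
  rintro ⟨a, b, rfl, rfl⟩ ⟨c, d, hv, rfl⟩
  rcases List.append_eq_append_iff.mp hv with ⟨e, he1, he2⟩ | ⟨e, he1, he2⟩
  · exact ⟨e, d ++ b, by rw [he2]; simp [List.append_assoc],
      by rw [he1]; simp [List.append_assoc]⟩
  · exact ⟨a ++ c, e, by rw [he1]; simp [List.append_assoc],
      by rw [he2]; simp [List.append_assoc]⟩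

lemma primitive_conj {u u' : List B} (hu : Primitive u) (hc : Conj u u') :
    Primitive u' := by
  obtain ⟨t1, t2, h1, h2⟩ := hc
  constructor
  · subst h2
    intro hnil
    obtain ⟨rfl, rfl⟩ := List.append_eq_nil_iff.mp hnil
    exact hu.1 (by simpa using h1)
  · intro v k hk hvk
    obtain ⟨v', hcv, hv'⟩ := conj_wpow (u := v) (p := k) (by rw [← hvk, h2])
    exact hu.2 v' k hk (h1.trans hv')

lemma lcm_lower_aux (g L a b e f : ℕ) (he : a = g + e) (hf : b = g + f)
    (hml : g * L = a * b) (hgpos : 0 < g) : a + b - g ≤ L := by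
  subst he; subst hf
  have key : g * ((g + e) + (g + f)) ≤ g * (L + g) := by
    rw [Nat.mul_add g L g, hml]
    nlinarith [Nat.zero_le (e * f)]
  have := Nat.le_of_mul_le_mul_left key hgpos
  omega

lemma lcm_lower {a b : ℕ} (ha : 0 < a) (hb : 0 < b) :
    a + b - Nat.gcd a b ≤ Nat.lcm a b := by
  have hgpos : 0 < Nat.gcd a b := Nat.gcd_pos_of_pos_left _ ha
  have h1 : Nat.gcd a b ≤ a := Nat.le_of_dvd ha (Nat.gcd_dvd_left a b)
  have h2 : Nat.gcd a b ≤ b := Nat.le_of_dvd hb (Nat.gcd_dvd_right a b)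
  exact lcm_lower_aux _ _ _ _ (a - Nat.gcd a b) (b - Nat.gcd a b)
    (by omega) (by omega) (Nat.gcd_mul_lcm a b) hgpos

lemma prim_eq {r s : List B} (hr : Primitive r) (hs : Primitive s) {i j : ℕ}
    (hi : 0 < i) (hj : 0 < j) (h : wpow r i = wpow s j) : r = s := by
  have hLr : 0 < r.length := List.length_pos_iff.mpr hr.1
  have hLs : 0 < s.length := List.length_pos_iff.mpr hs.1
  have hzlen : (wpow r i).length = i * r.length := wpow_length r i
  have hzlen' : (wpow r i).length = j * s.length := by rw [h, wpow_length]
  have hzpos : 0 < (wpow r i).length := by rw [hzlen]; positivity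
  have hdr : r.length ∣ (wpow r i).length := ⟨i, by rw [hzlen, Nat.mul_comm]⟩
  have hds : s.length ∣ (wpow r i).length := ⟨j, by rw [hzlen', Nat.mul_comm]⟩
  have hlcm : Nat.lcm r.length s.length ≤ (wpow r i).length :=
    Nat.le_of_dvd hzpos (Nat.lcm_dvd hdr hds)
  have hglen : r.length + s.length - Nat.gcd r.length s.length ≤ (wpow r i).length :=
    le_trans (lcm_lower hLr hLs) hlcm
  have hPr : Per (wpow r i) r.length := per_wpow r i
  have hPs : Per (wpow r i) s.length := by rw [h]; exact per_wpow s j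
  have hPg := per_gcd hLr hLs hglen hPr hPs
  have hgpos : 0 < Nat.gcd r.length s.length := Nat.gcd_pos_of_pos_left _ hLr
  have hgr : Nat.gcd r.length s.length ∣ r.length := Nat.gcd_dvd_left _ _
  have hgs : Nat.gcd r.length s.length ∣ s.length := Nat.gcd_dvd_right _ _
  have hr_take : (wpow r i).take r.length = r := take_wpow hi
  have hs_take : (wpow r i).take s.length = s := by rw [h]; exact take_wpow hj
  have hkr : (r.length / Nat.gcd r.length s.length) * Nat.gcd r.length s.length
      = r.length := Nat.div_mul_cancel hgr
  have hks : (s.length / Nat.gcd r.length s.length) * Nat.gcd r.length s.length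
      = s.length := Nat.div_mul_cancel hgs
  have hrw : r = wpow ((wpow r i).take (Nat.gcd r.length s.length))
      (r.length / Nat.gcd r.length s.length) := by
    conv_lhs => rw [← hr_take, ← hkr]
    exact take_wpow_of_per hgpos hPg (by rw [hkr, hzlen]; nlinarith)
  have hsw : s = wpow ((wpow r i).take (Nat.gcd r.length s.length))
      (s.length / Nat.gcd r.length s.length) := by
    conv_lhs => rw [← hs_take, ← hks]
    exact take_wpow_of_per hgpos hPg (by rw [hks, hzlen']; nlinarith)
  have honer : r.length / Nat.gcd r.length s.length = 1 :=
    hr.2 _ _ (Nat.div_pos (Nat.le_of_dvd hLr hgr) hgpos) hrw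
  have hones : s.length / Nat.gcd r.length s.length = 1 :=
    hs.2 _ _ (Nat.div_pos (Nat.le_of_dvd hLs hgs) hgpos) hsw
  rw [honer] at hrw
  rw [hones] at hsw
  exact hrw.trans hsw.symm

lemma infix_getElem {w a b x : List B} {m : ℕ} (hab : a ++ w ++ b = wpow x m)
    (hL : 0 < x.length) :
    ∀ (i : ℕ) (hi : i < w.length),
      w[i] = x[(a.length + i) % x.length]'(Nat.mod_lt _ hL) := by
  intro i hi
  have hj : a.length + i < (wpow x m).length := by
    rw [← hab]; simp only [List.length_append]; omega
  have e := wpow_getElem x m (a.length + i) hj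
  simp only [← hab] at e
  rw [List.getElem_append_left (show a.length + i < (a ++ w).length by
    simp only [List.length_append]; omega)] at e
  rw [List.getElem_append_right (by omega)] at e
  simp only [Nat.add_sub_cancel_left] at e
  exact e

lemma infix_per {w a b x : List B} {m : ℕ} (hab : a ++ w ++ b = wpow x m)
    (hL : 0 < x.length) : Per w x.length := by
  intro i hi
  rw [infix_getElem hab hL i (by omega), infix_getElem hab hL (i + x.length) hi]
  have h3 : a.length + (i + x.length) = (a.length + i) + x.length := by omega
  simp only [h3, Nat.add_mod_right]

lemma infix_take_conj {w a b x : List B} {m : ℕ} (hab : a ++ w ++ b = wpow x m)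
    (hL : 0 < x.length) (hwL : x.length ≤ w.length) :
    Conj x (w.take x.length) := by
  refine ⟨x.take (a.length % x.length), x.drop (a.length % x.length),
    (List.take_append_drop _ x).symm, ?_⟩
  have hr : a.length % x.length ≤ x.length := le_of_lt (Nat.mod_lt _ hL)
  apply List.ext_getElem
  · rw [List.length_take, List.length_append, List.length_drop, List.length_take]
    omega
  intro i h1 h2
  have hix : i < x.length := by
    rw [List.length_append, List.length_drop, List.length_take] at h2; omega
  rw [rot_getElem hr hL i hix, List.getElem_take,
    infix_getElem hab hL i (by omega)]
  have hidx : (a.length + i) % x.length = (i + a.length % x.length) % x.length := by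
    rw [Nat.add_mod a.length i, Nat.mod_eq_of_lt hix,
      Nat.add_comm (a.length % x.length) i]
  simp only [hidx]

theorem fine_wilf' {B : Type*} (x y : List B) (hx : x ≠ []) (hy : y ≠ [])
    (m n : ℕ)
    (h : ∃ w : List B, w <:+: wpow x m ∧ w <:+: wpow y n ∧
      x.length + y.length - Nat.gcd x.length y.length ≤ w.length)
    (rx ry : List B) (hrx : Primitive rx) (hry : Primitive ry)
    (hxr : ∃ p : ℕ, 1 ≤ p ∧ x = wpow rx p)
    (hyr : ∃ q : ℕ, 1 ≤ q ∧ y = wpow ry q) :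
    Conj rx ry := by
  obtain ⟨w, hwx, hwy, hwlen⟩ := h
  obtain ⟨p, hp, hxp⟩ := hxr
  obtain ⟨q, hq, hyq⟩ := hyr
  have hL : 0 < x.length := List.length_pos_iff.mpr hx
  have hM : 0 < y.length := List.length_pos_iff.mpr hy
  have hgL : Nat.gcd x.length y.length ∣ x.length := Nat.gcd_dvd_left _ _
  have hgM : Nat.gcd x.length y.length ∣ y.length := Nat.gcd_dvd_right _ _
  have hgpos : 0 < Nat.gcd x.length y.length := Nat.gcd_pos_of_pos_left _ hL
  have hgleL : Nat.gcd x.length y.length ≤ x.length := Nat.le_of_dvd hL hgL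
  have hgleM : Nat.gcd x.length y.length ≤ y.length := Nat.le_of_dvd hM hgM
  have hwL : x.length ≤ w.length := by omega
  have hwM : y.length ≤ w.length := by omega
  obtain ⟨a, b, hab⟩ := hwx
  obtain ⟨c, d, hcd⟩ := hwy
  have hPL : Per w x.length := infix_per hab hL
  have hPM : Per w y.length := infix_per hcd hM
  have hPg : Per w (Nat.gcd x.length y.length) := per_gcd hL hM hwlen hPL hPM
  have hkL : (x.length / Nat.gcd x.length y.length) * Nat.gcd x.length y.length
      = x.length := Nat.div_mul_cancel hgL
  have hkM : (y.length / Nat.gcd x.length y.length) * Nat.gcd x.length y.length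
      = y.length := Nat.div_mul_cancel hgM
  have hxw : w.take x.length = wpow (w.take (Nat.gcd x.length y.length))
      (x.length / Nat.gcd x.length y.length) := by
    conv_lhs => rw [← hkL]
    exact take_wpow_of_per hgpos hPg (by rw [hkL]; exact hwL)
  have hyw : w.take y.length = wpow (w.take (Nat.gcd x.length y.length))
      (y.length / Nat.gcd x.length y.length) := by
    conv_lhs => rw [← hkM]
    exact take_wpow_of_per hgpos hPg (by rw [hkM]; exact hwM)
  obtain ⟨t1, t2, hx12, hx21⟩ := infix_take_conj hab hL hwL
  obtain ⟨s1, s2, hy12, hy21⟩ := infix_take_conj hcd hM hwM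
  obtain ⟨rx', hcrx, hrx'⟩ := conj_wpow (u := rx) (p := p) (by rw [← hxp, hx12])
  obtain ⟨ry', hcry, hry'⟩ := conj_wpow (u := ry) (p := q) (by rw [← hyq, hy12])
  have hprx' : Primitive rx' := primitive_conj hrx hcrx
  have hpry' : Primitive ry' := primitive_conj hry hcry
  have hx1 : wpow rx' p = wpow (w.take (Nat.gcd x.length y.length))
      (x.length / Nat.gcd x.length y.length) := by
    rw [← hrx', ← hx21, hxw]
  have hy1 : wpow ry' q = wpow (w.take (Nat.gcd x.length y.length))
      (y.length / Nat.gcd x.length y.length) := by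
    rw [← hry', ← hy21, hyw]
  have hboth : wpow rx' (p * (y.length / Nat.gcd x.length y.length))
      = wpow ry' (q * (x.length / Nat.gcd x.length y.length)) := by
    rw [wpow_mul, wpow_mul, hx1, hy1, ← wpow_mul, ← wpow_mul,
      Nat.mul_comm (x.length / Nat.gcd x.length y.length)]
  have hda : 0 < x.length / Nat.gcd x.length y.length := Nat.div_pos hgleL hgpos
  have hdb : 0 < y.length / Nat.gcd x.length y.length := Nat.div_pos hgleM hgpos
  have hreq : rx' = ry' := prim_eq hprx' hpry'
    (Nat.mul_pos hp hdb) (Nat.mul_pos hq hda) hboth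
  exact conj_trans hcrx (conj_symm (hreq ▸ hcry))

end FWaux

/-- Fine and Wilf. -/
theorem fine_wilf {B : Type*} (x y : List B) (hx : x ≠ []) (hy : y ≠ [])
    (m n : ℕ)
    (h : ∃ w : List B, w <:+: wpow x m ∧ w <:+: wpow y n ∧
      x.length + y.length - Nat.gcd x.length y.length ≤ w.length)
    (rx ry : List B) (hrx : Primitive rx) (hry : Primitive ry)
    (hxr : ∃ p : ℕ, 1 ≤ p ∧ x = wpow rx p)
    (hyr : ∃ q : ℕ, 1 ≤ q ∧ y = wpow ry q) :
    Conj rx ry :=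
  FWaux.fine_wilf' x y hx hy m n h rx ry hrx hry hxr hyr
end
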